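/- arXiv:1301.5635 — 7 statements merged into one kernel-verified Lean document; each statement's English description precedes it below -/
import Mathlib

section
/- For every x > 0, the function ν ↦ M_ν(x) is log-convex on (-1/2, ∞); i.e., for all ν₁, ν₂ > -1/2 and α ∈ [0,1], M_{αν₁+(1-α)ν₂}(x) ≤ M_{ν₁}(x)^α · M_{ν₂}(x)^(1-α). -/
open Real MeasureTheory intervalIntegral

noncomputable def strM (ν x : ℝ) : ℝ :=
  2 / Real.sqrt Real.pi * ∫ t in (0:ℝ)..1, (1 - t ^ 2) ^ (ν - 1 / 2) * Real.exp (-x * t)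

lemma strM_meas (ν x : ℝ) :
    Measurable (fun t : ℝ => (1 - t ^ 2) ^ (ν - 1 / 2) * Real.exp (-x * t)) := by
  exact ((measurable_const.sub (measurable_id.pow_const 2)).pow_const _).mul
    ((measurable_id.const_mul (-x)).exp)

lemma strM_integrableOn {ν : ℝ} (x : ℝ) (hν : -1 / 2 < ν) (hx : 0 < x) :
    IntegrableOn (fun t : ℝ => (1 - t ^ 2) ^ (ν - 1 / 2) * Real.exp (-x * t))
      (Set.Ioo 0 1) := by
  have hr : (-1 : ℝ) < ν - 1 / 2 := by linarith
  set r : ℝ := ν - 1 / 2 with hrdef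
  have hG : IntegrableOn (fun t : ℝ => (2:ℝ) ^ |r| * (1 - t) ^ r) (Set.Ioo 0 1) := by
    have h1 : IntervalIntegrable (fun s : ℝ => s ^ r) volume 0 1 :=
      intervalIntegral.intervalIntegrable_rpow' hr
    have h2 := (h1.comp_sub_left 1).symm
    simp only [sub_zero, sub_self] at h2
    rw [intervalIntegrable_iff_integrableOn_Ioo_of_le (by norm_num)] at h2
    exact h2.const_mul _
  refine MeasureTheory.Integrable.mono hG ((strM_meas ν x).aestronglyMeasurable) ?_
  refine Filter.eventually_of_mem (ae_restrict_mem measurableSet_Ioo) ?_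
  rintro t ⟨ht0, ht1⟩
  have h1t : (0:ℝ) < 1 - t := by linarith
  have h1t' : (0:ℝ) < 1 + t := by linarith
  have hbase : (0:ℝ) < 1 - t ^ 2 := by nlinarith
  have hFnn : 0 ≤ (1 - t ^ 2) ^ r * Real.exp (-x * t) :=
    mul_nonneg (Real.rpow_nonneg hbase.le _) (Real.exp_pos _).le
  rw [Real.norm_of_nonneg hFnn, Real.norm_of_nonneg
    (mul_nonneg (Real.rpow_nonneg (by norm_num) _) (Real.rpow_nonneg h1t.le _))]
  have hexp : Real.exp (-x * t) ≤ 1 := by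
    rw [Real.exp_le_one_iff]; nlinarith
  have hsplit : (1 - t ^ 2) ^ r = (1 - t) ^ r * (1 + t) ^ r := by
    rw [← Real.mul_rpow h1t.le h1t'.le]; ring_nf
  have h2r : (1 + t) ^ r ≤ (2:ℝ) ^ |r| := by
    rcases le_or_gt 0 r with h | h
    · rw [abs_of_nonneg h]
      exact Real.rpow_le_rpow h1t'.le (by linarith) h
    · calc (1 + t) ^ r ≤ 1 := Real.rpow_le_one_of_one_le_of_nonpos (by linarith) h.le
        _ ≤ (2:ℝ) ^ |r| := Real.one_le_rpow (by norm_num) (abs_nonneg r)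
  calc (1 - t ^ 2) ^ r * Real.exp (-x * t)
      = (1 - t) ^ r * ((1 + t) ^ r * Real.exp (-x * t)) := by rw [hsplit]; ring
    _ ≤ (1 - t) ^ r * ((2:ℝ) ^ |r| * 1) := by
        refine mul_le_mul_of_nonneg_left ?_ (Real.rpow_nonneg h1t.le _)
        exact mul_le_mul h2r hexp (Real.exp_pos _).le (Real.rpow_nonneg (by norm_num) _)
    _ = (2:ℝ) ^ |r| * (1 - t) ^ r := by ring

theorem strM_logConvex_order (x : ℝ) (hx : 0 < x) :
    ∀ ν₁ ν₂ α : ℝ, -1 / 2 < ν₁ → -1 / 2 < ν₂ → 0 ≤ α → α ≤ 1 →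
      strM (α * ν₁ + (1 - α) * ν₂) x ≤ strM ν₁ x ^ α * strM ν₂ x ^ (1 - α) := by
  intro ν₁ ν₂ α h₁ h₂ hα0 hα1
  rcases eq_or_lt_of_le hα0 with rfl | hα0
  · simp
  rcases eq_or_lt_of_le hα1 with rfl | hα1
  · simp
  set νm : ℝ := α * ν₁ + (1 - α) * ν₂ with hνm
  have hm : -1 / 2 < νm := by nlinarith
  set F : ℝ → ℝ → ℝ := fun ν t => (1 - t ^ 2) ^ (ν - 1 / 2) * Real.exp (-x * t) with hF
  set I : ℝ → ENNReal := fun ν => ∫⁻ t in Set.Ioo 0 1, ENNReal.ofReal (F ν t) with hI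
  -- interval integral equals toReal of lintegral over Ioo
  have key0 : ∀ ν : ℝ, (∫ t in (0:ℝ)..1, F ν t) = (I ν).toReal := by
    intro ν
    rw [intervalIntegral.integral_of_le (by norm_num : (0:ℝ) ≤ 1),
      MeasureTheory.integral_Ioc_eq_integral_Ioo]
    rw [MeasureTheory.integral_eq_lintegral_of_nonneg_ae]
    · refine Filter.eventually_of_mem (ae_restrict_mem measurableSet_Ioo) ?_
      rintro t ⟨ht0, ht1⟩
      exact mul_nonneg (Real.rpow_nonneg (by nlinarith) _) (Real.exp_pos _).le
    · exact (strM_meas ν x).aestronglyMeasurable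
  have hfin : ∀ ν : ℝ, -1 / 2 < ν → I ν ≠ ⊤ := fun ν hν =>
    (strM_integrableOn x hν hx).lintegral_lt_top.ne
  -- Hölder
  have hconj : ((1:ℝ)/α).HolderConjugate (1/(1-α)) := by
    rw [Real.holderConjugate_iff]; constructor
    · exact one_lt_one_div hα0 hα1
    · rw [one_div, one_div, inv_inv, inv_inv]; ring
  have hmeasE : ∀ ν β : ℝ, AEMeasurable (fun t => ENNReal.ofReal (F ν t) ^ β)
      (volume.restrict (Set.Ioo (0:ℝ) 1)) :=
    fun ν β => (((strM_meas ν x).ennreal_ofReal).pow_const β).aemeasurable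
  have holder := ENNReal.lintegral_mul_le_Lp_mul_Lq (volume.restrict (Set.Ioo (0:ℝ) 1))
    hconj (hmeasE ν₁ α) (hmeasE ν₂ (1-α))
  have hmain : I νm ≤ I ν₁ ^ α * I ν₂ ^ (1 - α) := by
    have e1 : ∀ᵐ t ∂(volume.restrict (Set.Ioo (0:ℝ) 1)),
        ENNReal.ofReal (F νm t)
          = ((fun t => ENNReal.ofReal (F ν₁ t) ^ α) * fun t => ENNReal.ofReal (F ν₂ t) ^ (1-α)) t := by
      refine Filter.eventually_of_mem (ae_restrict_mem measurableSet_Ioo) ?_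
      rintro t ⟨ht0, ht1⟩
      have hbase : (0:ℝ) < 1 - t ^ 2 := by nlinarith
      have hFpos : ∀ ν : ℝ, 0 < F ν t := fun ν =>
        mul_pos (Real.rpow_pos_of_pos hbase _) (Real.exp_pos _)
      simp only [Pi.mul_apply]
      rw [ENNReal.ofReal_rpow_of_pos (hFpos ν₁), ENNReal.ofReal_rpow_of_pos (hFpos ν₂),
        ← ENNReal.ofReal_mul (by positivity)]
      congr 1
      rw [hF]
      simp only
      rw [Real.mul_rpow (Real.rpow_nonneg hbase.le _) (Real.exp_pos _).le,
        Real.mul_rpow (Real.rpow_nonneg hbase.le _) (Real.exp_pos _).le]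
      rw [← Real.rpow_mul hbase.le, ← Real.rpow_mul hbase.le,
        ← Real.exp_mul, ← Real.exp_mul, mul_mul_mul_comm, ← Real.rpow_add hbase,
        ← Real.exp_add]
      have e₁ : (ν₁ - 1 / 2) * α + (ν₂ - 1 / 2) * (1 - α) = νm - 1 / 2 := by
        rw [hνm]; ring
      have e₂ : -x * t * α + -x * t * (1 - α) = -x * t := by ring
      rw [e₁, e₂]
    have e2 : ∀ β : ℝ, β ≠ 0 → ∀ ν : ℝ, (∫⁻ t in Set.Ioo (0:ℝ) 1,
        (ENNReal.ofReal (F ν t) ^ β) ^ (1/β)) = I ν := by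
      intro β hβ ν
      refine lintegral_congr fun t => ?_
      rw [← ENNReal.rpow_mul, mul_one_div_cancel hβ, ENNReal.rpow_one]
    calc I νm = ∫⁻ t in Set.Ioo (0:ℝ) 1,
          ((fun t => ENNReal.ofReal (F ν₁ t) ^ α) * fun t => ENNReal.ofReal (F ν₂ t) ^ (1-α)) t :=
        lintegral_congr_ae e1
      _ ≤ _ := holder
      _ = I ν₁ ^ α * I ν₂ ^ (1 - α) := by
          rw [one_div_one_div, one_div_one_div, e2 α hα0.ne' ν₁,
            e2 (1 - α) (by linarith) ν₂]
  -- put everything together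
  have hc : (0:ℝ) < 2 / Real.sqrt Real.pi := by positivity
  have hA : strM ν₁ x = 2 / Real.sqrt Real.pi * (I ν₁).toReal := by rw [← key0]; rfl
  have hB : strM ν₂ x = 2 / Real.sqrt Real.pi * (I ν₂).toReal := by rw [← key0]; rfl
  have hM : strM νm x = 2 / Real.sqrt Real.pi * (I νm).toReal := by rw [← key0]; rfl
  set c : ℝ := 2 / Real.sqrt Real.pi
  set A : ℝ := (I ν₁).toReal
  set B : ℝ := (I ν₂).toReal
  have hAB : (I νm).toReal ≤ A ^ α * B ^ (1 - α) := by
    calc (I νm).toReal ≤ ((I ν₁) ^ α * (I ν₂) ^ (1 - α)).toReal := by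
          refine ENNReal.toReal_mono ?_ hmain
          exact ENNReal.mul_ne_top
            (ENNReal.rpow_ne_top_of_nonneg hα0.le (hfin ν₁ h₁))
            (ENNReal.rpow_ne_top_of_nonneg (by linarith) (hfin ν₂ h₂))
      _ = A ^ α * B ^ (1 - α) := by
          rw [ENNReal.toReal_mul, ← ENNReal.toReal_rpow, ← ENNReal.toReal_rpow]
  have hcc : c = c ^ α * c ^ (1 - α) := by
    rw [← Real.rpow_add hc]; norm_num
  rw [hA, hB, hM, Real.mul_rpow hc.le ENNReal.toReal_nonneg,
    Real.mul_rpow hc.le ENNReal.toReal_nonneg]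
  calc c * (I νm).toReal ≤ c * (A ^ α * B ^ (1 - α)) :=
        mul_le_mul_of_nonneg_left hAB hc.le
    _ = c ^ α * A ^ α * (c ^ (1 - α) * B ^ (1 - α)) := by nth_rewrite 1 [hcc]; ring
end

section
/- For all x, y > 0 and ν > -1/2, M_ν(x+y) ≥ (Γ(ν+1)/Γ(ν+1/2)) · M_ν(x) · M_ν(y), where M_ν(x) = (2/√π) ∫₀¹ (1-t²)^(ν-1/2) e^(-xt) dt. -/
open Real MeasureTheory intervalIntegral Set

namespace StrMAux

lemma w_nonneg {p t : ℝ} (ht : t ∈ Ioc (0:ℝ) 1) : 0 ≤ (1 - t ^ 2) ^ p := by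
  apply Real.rpow_nonneg
  nlinarith [ht.1, ht.2]

lemma integrable_aux {p : ℝ} (hp : -1 < p) {x : ℝ} (hx : 0 ≤ x) :
    IntegrableOn (fun t : ℝ => (1 - t ^ 2) ^ p * Real.exp (-x * t)) (Ioc (0:ℝ) 1) := by
  have hdom : IntegrableOn (fun t : ℝ => ((2:ℝ) ^ p + 1) * (1 - t) ^ p) (Ioc (0:ℝ) 1) := by
    have h1 : IntervalIntegrable (fun s : ℝ => s ^ p) volume 0 1 :=
      intervalIntegrable_rpow' hp
    have h2 := h1.comp_sub_left 1
    simp only [sub_zero, sub_self] at h2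
    have h3 : IntervalIntegrable (fun t : ℝ => (1 - t) ^ p) volume 0 1 := h2.symm
    exact (h3.const_mul _).1
  refine Integrable.mono' hdom (Measurable.aestronglyMeasurable (by fun_prop)) ?_
  filter_upwards [ae_restrict_mem measurableSet_Ioc] with t ht
  have ht0 : 0 < t := ht.1
  have ht1 : t ≤ 1 := ht.2
  have h1t : 0 ≤ 1 - t := by linarith
  have h1t2 : (1 - t ^ 2 : ℝ) = (1 - t) * (1 + t) := by ring
  have hsplit : (1 - t ^ 2) ^ p = (1 - t) ^ p * (1 + t) ^ p := by
    rw [h1t2, Real.mul_rpow h1t (by linarith)]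
  have hBle : (1 + t) ^ p ≤ (2:ℝ) ^ p + 1 := by
    rcases le_or_gt 0 p with hp0 | hp0
    · have := Real.rpow_le_rpow (by linarith) (by linarith : (1 + t : ℝ) ≤ 2) hp0
      linarith
    · have := Real.rpow_le_one_of_one_le_of_nonpos (by linarith : (1:ℝ) ≤ 1 + t) hp0.le
      have h2p : (0:ℝ) < (2:ℝ) ^ p := Real.rpow_pos_of_pos (by norm_num) p
      linarith
  have hE : Real.exp (-x * t) ≤ 1 := by
    rw [Real.exp_le_one_iff]
    nlinarith
  have hA : 0 ≤ (1 - t) ^ p := Real.rpow_nonneg h1t p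
  have hB : 0 ≤ (1 + t) ^ p := Real.rpow_nonneg (by linarith) p
  have hEpos : 0 < Real.exp (-x * t) := Real.exp_pos _
  rw [Real.norm_of_nonneg (mul_nonneg (by rw [hsplit]; positivity) (Real.exp_pos _).le)]
  calc (1 - t ^ 2) ^ p * Real.exp (-x * t)
      ≤ (1 - t ^ 2) ^ p * 1 := by
        apply mul_le_mul_of_nonneg_left hE
        rw [hsplit]; positivity
    _ = (1 - t) ^ p * (1 + t) ^ p := by rw [mul_one, hsplit]
    _ ≤ (1 - t) ^ p * ((2:ℝ) ^ p + 1) := mul_le_mul_of_nonneg_left hBle hA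
    _ = ((2:ℝ) ^ p + 1) * (1 - t) ^ p := by ring

lemma key {p : ℝ} (hp : -1 < p) {x y : ℝ} (hx : 0 ≤ x) (hy : 0 ≤ y) :
    (∫ t in Ioc (0:ℝ) 1, (1 - t ^ 2) ^ p * Real.exp (-x * t)) *
      (∫ t in Ioc (0:ℝ) 1, (1 - t ^ 2) ^ p * Real.exp (-y * t)) ≤
    (∫ t in Ioc (0:ℝ) 1, (1 - t ^ 2) ^ p * Real.exp (-(x + y) * t)) *
      (∫ t in Ioc (0:ℝ) 1, (1 - t ^ 2) ^ p * Real.exp (-0 * t)) := by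
  set μ : Measure ℝ := volume.restrict (Ioc (0:ℝ) 1) with hμ
  set fx : ℝ → ℝ := fun t => (1 - t ^ 2) ^ p * Real.exp (-x * t) with hfx
  set fy : ℝ → ℝ := fun t => (1 - t ^ 2) ^ p * Real.exp (-y * t) with hfy
  set fxy : ℝ → ℝ := fun t => (1 - t ^ 2) ^ p * Real.exp (-(x + y) * t) with hfxy
  set f0 : ℝ → ℝ := fun t => (1 - t ^ 2) ^ p * Real.exp (-0 * t) with hf0
  have hix : Integrable fx μ := integrable_aux hp hx
  have hiy : Integrable fy μ := integrable_aux hp hy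
  have hixy : Integrable fxy μ := integrable_aux hp (by linarith)
  have hi0 : Integrable f0 μ := integrable_aux hp le_rfl
  have hA : Integrable (fun z : ℝ × ℝ => fx z.1 * fy z.2) (μ.prod μ) := hix.mul_prod hiy
  have hA' : Integrable (fun z : ℝ × ℝ => fx z.2 * fy z.1) (μ.prod μ) := by
    have := hiy.mul_prod hix
    simpa [mul_comm] using this
  have hB : Integrable (fun z : ℝ × ℝ => fxy z.1 * f0 z.2) (μ.prod μ) := hixy.mul_prod hi0
  have hB' : Integrable (fun z : ℝ × ℝ => fxy z.2 * f0 z.1) (μ.prod μ) := by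
    have := hi0.mul_prod hixy
    simpa [mul_comm] using this
  have hswapA : ∫ z : ℝ × ℝ, fx z.2 * fy z.1 ∂(μ.prod μ) =
      ∫ z : ℝ × ℝ, fx z.1 * fy z.2 ∂(μ.prod μ) := by
    rw [← integral_prod_swap (fun z : ℝ × ℝ => fx z.1 * fy z.2)]
    rfl
  have hswapB : ∫ z : ℝ × ℝ, fxy z.2 * f0 z.1 ∂(μ.prod μ) =
      ∫ z : ℝ × ℝ, fxy z.1 * f0 z.2 ∂(μ.prod μ) := by
    rw [← integral_prod_swap (fun z : ℝ × ℝ => fxy z.1 * f0 z.2)]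
    rfl
  rw [← integral_prod_mul, ← integral_prod_mul]
  have h2 : (2:ℝ) * ∫ z : ℝ × ℝ, fx z.1 * fy z.2 ∂(μ.prod μ) ≤
      2 * ∫ z : ℝ × ℝ, fxy z.1 * f0 z.2 ∂(μ.prod μ) := by
    have e1 : (2:ℝ) * ∫ z : ℝ × ℝ, fx z.1 * fy z.2 ∂(μ.prod μ) =
        ∫ z : ℝ × ℝ, (fx z.1 * fy z.2 + fx z.2 * fy z.1) ∂(μ.prod μ) := by
      rw [integral_add hA hA', hswapA]; ring
    have e2 : (2:ℝ) * ∫ z : ℝ × ℝ, fxy z.1 * f0 z.2 ∂(μ.prod μ) =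
        ∫ z : ℝ × ℝ, (fxy z.1 * f0 z.2 + fxy z.2 * f0 z.1) ∂(μ.prod μ) := by
      rw [integral_add hB hB', hswapB]; ring
    rw [e1, e2]
    refine integral_mono_ae (hA.add hA') (hB.add hB') ?_
    have hprod : μ.prod μ = (volume.prod volume).restrict (Ioc (0:ℝ) 1 ×ˢ Ioc (0:ℝ) 1) := by
      rw [hμ, Measure.prod_restrict]
    rw [hprod]
    filter_upwards [ae_restrict_mem (measurableSet_Ioc.prod measurableSet_Ioc)] with z hz
    obtain ⟨hs, ht⟩ := hz
    set s := z.1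
    set t := z.2
    have hws : 0 ≤ (1 - s ^ 2) ^ p := w_nonneg hs
    have hwt : 0 ≤ (1 - t ^ 2) ^ p := w_nonneg ht
    simp only [hfx, hfy, hfxy, hf0]
    have key0 : (Real.exp (-x * s) - Real.exp (-x * t)) *
        (Real.exp (-y * s) - Real.exp (-y * t)) ≥ 0 := by
      rcases le_total s t with hst | hst
      · have h1 : Real.exp (-x * t) ≤ Real.exp (-x * s) := by
          apply Real.exp_le_exp.2; nlinarith
        have h2 : Real.exp (-y * t) ≤ Real.exp (-y * s) := by
          apply Real.exp_le_exp.2; nlinarith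
        nlinarith
      · have h1 : Real.exp (-x * s) ≤ Real.exp (-x * t) := by
          apply Real.exp_le_exp.2; nlinarith
        have h2 : Real.exp (-y * s) ≤ Real.exp (-y * t) := by
          apply Real.exp_le_exp.2; nlinarith
        nlinarith
    have hexs : Real.exp (-(x + y) * s) = Real.exp (-x * s) * Real.exp (-y * s) := by
      rw [← Real.exp_add]; ring_nf
    have hext : Real.exp (-(x + y) * t) = Real.exp (-x * t) * Real.exp (-y * t) := by
      rw [← Real.exp_add]; ring_nf
    have hes0 : Real.exp (-0 * s) = 1 := by norm_num
    have het0 : Real.exp (-0 * t) = 1 := by norm_num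
    rw [hexs, hext, hes0, het0]
    nlinarith [mul_nonneg (mul_nonneg hws hwt) key0]
  linarith


lemma integrable_w {p : ℝ} (hp : -1 < p) :
    IntegrableOn (fun t : ℝ => (1 - t ^ 2) ^ p) (Ioc (0:ℝ) 1) := by
  have h := integrable_aux hp (le_refl (0:ℝ))
  simpa using h

lemma beta_value {ν : ℝ} (hν : -1 / 2 < ν) :
    ∫ t in Ioc (0:ℝ) 1, (1 - t ^ 2) ^ (ν - 1 / 2) =
      Real.sqrt Real.pi * Real.Gamma (ν + 1 / 2) / (2 * Real.Gamma (ν + 1)) := by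
  set g : ℝ → ℝ := fun u => u ^ ((1:ℝ)/2 - 1) * (1 - u) ^ (ν + 1/2 - 1) with hg
  set u₀ : ℂ := ((1/2 : ℝ) : ℂ) with hu₀
  set v₀ : ℂ := ((ν + 1/2 : ℝ) : ℂ) with hv₀
  have hu : 0 < u₀.re := by norm_num [hu₀]
  have hv : 0 < v₀.re := by simp [hv₀]; linarith
  have hCconv := Complex.betaIntegral_convergent hu hv
  -- equality of complex and real integrands on [0,1]
  have hEq : ∀ x : ℝ, 0 ≤ x → x ≤ 1 →
      (x:ℂ) ^ (u₀ - 1) * ((1:ℂ) - x) ^ (v₀ - 1) = ((g x : ℝ) : ℂ) := by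
    intro x hx0 hx1
    have h1 : (x:ℂ) ^ (u₀ - 1) = ((x ^ ((1:ℝ)/2 - 1) : ℝ) : ℂ) := by
      rw [Complex.ofReal_cpow hx0]
      push_cast [hu₀]
      ring_nf
    have h2 : ((1:ℂ) - x) ^ (v₀ - 1) = (((1 - x) ^ (ν + 1/2 - 1) : ℝ) : ℂ) := by
      have : ((1:ℂ) - x) = (((1 - x : ℝ)) : ℂ) := by push_cast; ring
      rw [this, Complex.ofReal_cpow (by linarith)]
      push_cast [hv₀]
      ring_nf
    rw [h1, h2, hg]
    push_cast
    ring
  -- real beta integral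
  set Br : ℝ := ∫ x in (0:ℝ)..1, g x with hBr
  have hBc : Complex.betaIntegral u₀ v₀ = (Br : ℂ) := by
    rw [Complex.betaIntegral, hBr]
    rw [intervalIntegral.integral_congr (g := fun x : ℝ => ((g x : ℝ) : ℂ)) ?_]
    · exact intervalIntegral.integral_ofReal
    · intro x hx
      rw [uIcc_of_le zero_le_one] at hx
      exact hEq x hx.1 hx.2
  -- Gamma identity
  have hGam := Complex.Gamma_mul_Gamma_eq_betaIntegral hu hv
  rw [hBc] at hGam
  have huv : u₀ + v₀ = ((ν + 1 : ℝ) : ℂ) := by rw [hu₀, hv₀]; push_cast; ring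
  rw [huv, hu₀, hv₀, Complex.Gamma_ofReal, Complex.Gamma_ofReal, Complex.Gamma_ofReal] at hGam
  have hGamR : Real.Gamma (1/2) * Real.Gamma (ν + 1/2) = Real.Gamma (ν + 1) * Br := by
    exact_mod_cast hGam
  -- integrability of g
  have hgI : IntegrableOn g (Ioc (0:ℝ) 1) := by
    have h1 := (hCconv.1).re
    apply h1.congr
    filter_upwards [ae_restrict_mem measurableSet_Ioc] with x hx
    rw [hEq x hx.1.le hx.2]
    simp
  have hgIcc : IntegrableOn g (Icc (0:ℝ) 1) := by
    rwa [integrableOn_Icc_iff_integrableOn_Ioc]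
  -- pointwise substitution identity
  have hpt : ∀ x : ℝ, 0 < x → (2 * x) • g (x ^ 2) = 2 * (1 - x ^ 2) ^ (ν - 1/2) := by
    intro x hx
    have h1 : (x ^ 2 : ℝ) ^ ((1:ℝ)/2 - 1) = x⁻¹ := by
      rw [← Real.rpow_natCast x 2, ← Real.rpow_mul hx.le]
      norm_num
      rw [Real.rpow_neg_one]
    have h2 : (ν + 1/2 - 1 : ℝ) = ν - 1/2 := by ring
    rw [hg]
    simp only [smul_eq_mul, h1, h2]
    field_simp
  -- substitution
  have hsub : (∫ x in (0:ℝ)..1, (2 * x) • g (x ^ 2)) = Br := by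
    have := intervalIntegral.integral_comp_smul_deriv''' (a := (0:ℝ)) (b := 1)
      (f := fun t => t ^ 2) (f' := fun t => 2 * t) (g := g)
      (by fun_prop)
      ?_ ?_ ?_ ?_
    · rw [hBr]
      convert this using 2 <;> norm_num
    · intro x hx
      have hD : HasDerivAt (fun t : ℝ => t ^ 2) (2 * x) x := by
        simpa [mul_comm] using hasDerivAt_pow 2 x
      exact hD.hasDerivWithinAt
    · apply ContinuousOn.mono (s := Ioo (0:ℝ) 1)
      · apply ContinuousOn.mul
        · apply ContinuousOn.rpow_const continuousOn_id
          intro x hx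
          exact Or.inl (ne_of_gt hx.1)
        · apply ContinuousOn.rpow_const (by fun_prop)
          intro x hx
          exact Or.inl (sub_ne_zero.2 (ne_of_lt hx.2).symm)
      · intro z hz
        simp only [min_eq_left zero_le_one, max_eq_right zero_le_one] at hz
        obtain ⟨x, hx, rfl⟩ := hz
        simp only [mem_Ioo]
        constructor <;> nlinarith [hx.1, hx.2]
    · apply hgIcc.mono_set
      intro z hz
      obtain ⟨x, hx, rfl⟩ := hz
      rw [uIcc_of_le zero_le_one] at hx
      simp only [mem_Icc]
      constructor
      · positivity
      · nlinarith [hx.1, hx.2]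
    · rw [uIcc_of_le zero_le_one, integrableOn_Icc_iff_integrableOn_Ioc]
      have hbase : IntegrableOn (fun t : ℝ => 2 * (1 - t ^ 2) ^ (ν - 1/2)) (Ioc (0:ℝ) 1) :=
        (integrable_w (by linarith)).const_mul 2
      apply hbase.congr
      filter_upwards [ae_restrict_mem measurableSet_Ioc] with x hx
      exact (hpt x hx.1).symm
  -- convert substituted integral
  have hL : (∫ x in (0:ℝ)..1, (2 * x) • g (x ^ 2)) =
      2 * ∫ t in Ioc (0:ℝ) 1, (1 - t ^ 2) ^ (ν - 1/2) := by
    rw [intervalIntegral.integral_of_le zero_le_one]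
    rw [setIntegral_congr_fun measurableSet_Ioc (g := fun x => 2 * (1 - x ^ 2) ^ (ν - 1/2))
      (fun x hx => hpt x hx.1)]
    rw [MeasureTheory.integral_const_mul]
  have hπ : Real.Gamma (1/2) = Real.sqrt Real.pi := Real.Gamma_one_half_eq
  have hΓpos : 0 < Real.Gamma (ν + 1) := Real.Gamma_pos_of_pos (by linarith)
  have h2I : 2 * (∫ t in Ioc (0:ℝ) 1, (1 - t ^ 2) ^ (ν - 1/2)) = Br := by
    rw [← hL, hsub]
  rw [hπ] at hGamR
  rw [eq_div_iff (ne_of_gt (by positivity))]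
  rw [← h2I] at hGamR
  linear_combination -hGamR

end StrMAux

theorem strM_supermultiplicative (ν x y : ℝ) (hν : -1 / 2 < ν) (hx : 0 < x) (hy : 0 < y) :
    strM ν (x + y) ≥ Real.Gamma (ν + 1) / Real.Gamma (ν + 1 / 2) * strM ν x * strM ν y := by
  have hp : -1 < ν - 1 / 2 := by linarith
  rw [ge_iff_le, strM, strM, strM]
  rw [intervalIntegral.integral_of_le zero_le_one, intervalIntegral.integral_of_le zero_le_one,
    intervalIntegral.integral_of_le zero_le_one]
  set s : ℝ := Real.sqrt Real.pi with hs
  set Ix : ℝ := ∫ t in Ioc (0:ℝ) 1, (1 - t ^ 2) ^ (ν - 1 / 2) * Real.exp (-x * t) with hIx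
  set Iy : ℝ := ∫ t in Ioc (0:ℝ) 1, (1 - t ^ 2) ^ (ν - 1 / 2) * Real.exp (-y * t) with hIy
  set Ixy : ℝ := ∫ t in Ioc (0:ℝ) 1, (1 - t ^ 2) ^ (ν - 1 / 2) * Real.exp (-(x + y) * t) with hIxy
  have hkey := StrMAux.key hp hx.le hy.le
  have hI0 : (∫ t in Ioc (0:ℝ) 1, (1 - t ^ 2) ^ (ν - 1 / 2) * Real.exp (-0 * t)) =
      s * Real.Gamma (ν + 1 / 2) / (2 * Real.Gamma (ν + 1)) := by
    rw [hs]
    rw [← StrMAux.beta_value hν]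
    apply setIntegral_congr_fun measurableSet_Ioc
    intro t ht
    simp
  rw [hI0] at hkey
  have hspos : 0 < s := Real.sqrt_pos.2 Real.pi_pos
  have hΓ1 : 0 < Real.Gamma (ν + 1) := Real.Gamma_pos_of_pos (by linarith)
  have hΓ2 : 0 < Real.Gamma (ν + 1 / 2) := Real.Gamma_pos_of_pos (by linarith)
  set a : ℝ := Real.Gamma (ν + 1) with ha
  set b : ℝ := Real.Gamma (ν + 1 / 2) with hb
  calc a / b * (2 / s * Ix) * (2 / s * Iy)
      = 4 * a / (s ^ 2 * b) * (Ix * Iy) := by ring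
    _ ≤ 4 * a / (s ^ 2 * b) * (Ixy * (s * b / (2 * a))) := by
        apply mul_le_mul_of_nonneg_left hkey
        positivity
    _ = 2 / s * Ixy := by
        field_simp [hΓ1.ne', hΓ2.ne', hspos.ne']
        ring
end

section
/- For all ν ≥ 1/2 and x > 0, M_ν(x) ≥ (Γ(ν+1/2)/Γ(ν+1)) · (1 - e^(-x))/x, where M_ν(x) = (2/√π) ∫₀¹ (1-t²)^(ν-1/2) e^(-xt) dt. The inequality is reversed when |ν| < 1/2. -/
open Real MeasureTheory intervalIntegral

section Aux

lemma cheb_le {f g : ℝ → ℝ}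
    (hf : IntegrableOn f (Set.Ioo 0 1)) (hg : IntegrableOn g (Set.Ioo 0 1))
    (hfg : IntegrableOn (fun t => f t * g t) (Set.Ioo 0 1))
    (h : ∀ s ∈ Set.Ioo (0:ℝ) 1, ∀ t ∈ Set.Ioo (0:ℝ) 1, (f s - f t) * (g s - g t) ≤ 0) :
    ∫ t in Set.Ioo (0:ℝ) 1, f t * g t ≤
      (∫ t in Set.Ioo (0:ℝ) 1, f t) * ∫ t in Set.Ioo (0:ℝ) 1, g t := by
  set C := ∫ t in Set.Ioo (0:ℝ) 1, f t * g t with hCdef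
  set F := ∫ t in Set.Ioo (0:ℝ) 1, f t with hFdef
  set G := ∫ t in Set.Ioo (0:ℝ) 1, g t with hGdef
  have hvol : (volume (Set.Ioo (0:ℝ) 1)).toReal = 1 := by simp
  have key : ∀ t ∈ Set.Ioo (0:ℝ) 1, C + f t * g t ≤ g t * F + f t * G := by
    intro t ht
    have h1 : (∫ s in Set.Ioo (0:ℝ) 1, (f s - f t) * (g s - g t)) ≤ 0 := by
      apply integral_nonpos_of_ae
      filter_upwards [ae_restrict_mem measurableSet_Ioo] with s hs
      exact h s hs t ht
    have hA : Integrable (fun s => f s * g s - g t * f s) (volume.restrict (Set.Ioo 0 1)) :=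
      hfg.sub (hf.const_mul (g t))
    have hB : Integrable (fun s => f t * g s - f t * g t) (volume.restrict (Set.Ioo 0 1)) :=
      (hg.const_mul (f t)).sub (integrable_const _)
    have h2 : (∫ s in Set.Ioo (0:ℝ) 1, (f s - f t) * (g s - g t))
        = (C - g t * F) - (f t * G - f t * g t) := by
      have e : ∀ s, (f s - f t) * (g s - g t)
          = (f s * g s - g t * f s) - (f t * g s - f t * g t) := by intro s; ring
      simp_rw [e]
      rw [integral_sub hA hB, integral_sub hfg (hf.const_mul _),
        integral_sub (hg.const_mul _) (integrable_const _),
        MeasureTheory.integral_const_mul, MeasureTheory.integral_const_mul, setIntegral_const, measureReal_def, hvol]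
      simp
      rfl
    rw [h2] at h1; linarith
  have hL : Integrable (fun t => C + f t * g t) (volume.restrict (Set.Ioo 0 1)) :=
    (integrable_const C).add hfg
  have hR : Integrable (fun t => g t * F + f t * G) (volume.restrict (Set.Ioo 0 1)) :=
    (hg.mul_const F).add (hf.mul_const G)
  have hmono := setIntegral_mono_on hL hR measurableSet_Ioo key
  rw [integral_add (integrable_const C) hfg,
    integral_add (hg.mul_const F) (hf.mul_const G),
    MeasureTheory.integral_mul_const, MeasureTheory.integral_mul_const, setIntegral_const,
    measureReal_def, hvol] at hmono
  simp only [smul_eq_mul, one_mul] at hmono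
  nlinarith

lemma cheb_ge {f g : ℝ → ℝ}
    (hf : IntegrableOn f (Set.Ioo 0 1)) (hg : IntegrableOn g (Set.Ioo 0 1))
    (hfg : IntegrableOn (fun t => f t * g t) (Set.Ioo 0 1))
    (h : ∀ s ∈ Set.Ioo (0:ℝ) 1, ∀ t ∈ Set.Ioo (0:ℝ) 1, 0 ≤ (f s - f t) * (g s - g t)) :
    (∫ t in Set.Ioo (0:ℝ) 1, f t) * (∫ t in Set.Ioo (0:ℝ) 1, g t) ≤
      ∫ t in Set.Ioo (0:ℝ) 1, f t * g t := by
  have hfg' : IntegrableOn (fun t => (fun t => -f t) t * g t) (Set.Ioo 0 1) := by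
    have : IntegrableOn (fun t => -(f t * g t)) (Set.Ioo 0 1) := hfg.neg
    simpa [neg_mul] using this
  have := cheb_le (f := fun t => -f t) (g := g) hf.neg hg hfg'
    (by intro s hs t ht; nlinarith [h s hs t ht])
  simp only [neg_mul, MeasureTheory.integral_neg, neg_mul] at this
  linarith

lemma meas_aux (p : ℝ) : Measurable (fun t : ℝ => (1 - t ^ 2) ^ p) := by fun_prop

lemma integrableOn_one_sub_sq {p : ℝ} (hp : -1 < p) :
    IntegrableOn (fun t : ℝ => (1 - t ^ 2) ^ p) (Set.Ioc 0 1) := by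
  have hmeas : AEStronglyMeasurable (fun t : ℝ => (1 - t ^ 2) ^ p)
      (volume.restrict (Set.Ioc (0:ℝ) 1)) := (meas_aux p).aestronglyMeasurable
  rcases le_or_gt p 0 with hp0 | hp0
  · have hmaj : IntegrableOn (fun t : ℝ => (1 - t) ^ p) (Set.Ioc 0 1) := by
      have h1 : IntervalIntegrable (fun x : ℝ => x ^ p) volume 0 1 := intervalIntegrable_rpow' hp
      have h2 := h1.comp_sub_left 1
      simp only [sub_zero, sub_self] at h2
      have h3 := h2.symm
      rwa [intervalIntegrable_iff_integrableOn_Ioc_of_le (by norm_num)] at h3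
    apply Integrable.mono' hmaj hmeas
    filter_upwards [ae_restrict_mem measurableSet_Ioc] with t ht
    rcases ht with ⟨ht0, ht1⟩
    rw [Real.norm_of_nonneg (Real.rpow_nonneg (by nlinarith) p)]
    have hfactor : (1 : ℝ) - t ^ 2 = (1 - t) * (1 + t) := by ring
    rw [hfactor, Real.mul_rpow (by linarith) (by linarith)]
    calc (1 - t) ^ p * (1 + t) ^ p ≤ (1 - t) ^ p * 1 := by
          apply mul_le_mul_of_nonneg_left _ (Real.rpow_nonneg (by linarith) p)
          exact Real.rpow_le_one_of_one_le_of_nonpos (by linarith) hp0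
      _ = (1 - t) ^ p := mul_one _
  · apply Integrable.mono' (integrable_const (1:ℝ)) hmeas
    filter_upwards [ae_restrict_mem measurableSet_Ioc] with t ht
    rcases ht with ⟨ht0, ht1⟩
    rw [Real.norm_of_nonneg (Real.rpow_nonneg (by nlinarith) p)]
    exact Real.rpow_le_one (by nlinarith) (by nlinarith) hp0.le

lemma integrableOn_one_sub_sq_Ioo {p : ℝ} (hp : -1 < p) :
    IntegrableOn (fun t : ℝ => (1 - t ^ 2) ^ p) (Set.Ioo 0 1) :=
  (integrableOn_one_sub_sq hp).mono_set Set.Ioo_subset_Ioc_self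

lemma integrableOn_main {p x : ℝ} (hp : -1 < p) (hx : 0 ≤ x) :
    IntegrableOn (fun t : ℝ => (1 - t ^ 2) ^ p * Real.exp (-x * t)) (Set.Ioo 0 1) := by
  apply Integrable.mono' (integrableOn_one_sub_sq_Ioo hp)
    (((meas_aux p).mul (by fun_prop : Measurable fun t : ℝ => Real.exp (-x * t))).aestronglyMeasurable)
  filter_upwards [ae_restrict_mem measurableSet_Ioo] with t ht
  rcases ht with ⟨ht0, ht1⟩
  have h1 : (0:ℝ) ≤ (1 - t ^ 2) ^ p := Real.rpow_nonneg (by nlinarith) p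
  have h2 : Real.exp (-x * t) ≤ 1 := by
    rw [Real.exp_le_one_iff]; nlinarith
  simp only [Pi.mul_apply]
  rw [Real.norm_of_nonneg (mul_nonneg h1 (Real.exp_nonneg _))]
  nlinarith [Real.exp_nonneg (-x * t)]

lemma integrableOn_exp_Ioo {x : ℝ} :
    IntegrableOn (fun t : ℝ => Real.exp (-x * t)) (Set.Ioo 0 1) := by
  exact ((by fun_prop : Continuous fun t : ℝ => Real.exp (-x * t)).continuousOn.integrableOn_Icc).mono_set Set.Ioo_subset_Icc_self

lemma cplx_eq (p x : ℝ) (hx0 : 0 ≤ x) (hx1 : x ≤ 1) :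
    (x : ℂ) ^ ((1:ℂ)/2 - 1) * (1 - (x : ℂ)) ^ (((p:ℂ) + 1) - 1)
      = ((x ^ (-(1/2):ℝ) * (1 - x) ^ p : ℝ) : ℂ) := by
  have e1 : ((1:ℂ)/2) - 1 = ((-(1/2) : ℝ) : ℂ) := by norm_num
  have e2 : ((p:ℂ) + 1) - 1 = ((p : ℝ) : ℂ) := by push_cast; ring
  have e3 : (1 : ℂ) - (x:ℂ) = ((1 - x : ℝ) : ℂ) := by norm_num
  rw [e1, e2, e3, ← Complex.ofReal_cpow hx0, ← Complex.ofReal_cpow (by linarith),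
    ← Complex.ofReal_mul]

lemma betaIntegrand_integrableOn {p : ℝ} (hp : -1 < p) :
    IntegrableOn (fun x : ℝ => x ^ (-(1/2):ℝ) * (1 - x) ^ p) (Set.Icc 0 1) := by
  have h := Complex.betaIntegral_convergent (u := 1/2) (v := (p:ℂ) + 1)
    (by norm_num) (by simp; linarith)
  rw [intervalIntegrable_iff_integrableOn_Ioc_of_le (by norm_num)] at h
  rw [integrableOn_Icc_iff_integrableOn_Ioc]
  have h2 := h.re
  apply MeasureTheory.IntegrableOn.congr_fun h2 _ measurableSet_Ioc
  intro x hx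
  simp only [cplx_eq p x hx.1.le hx.2, RCLike.re_to_complex, Complex.ofReal_re]

lemma realBeta (ν : ℝ) (hν : -(1/2) < ν) :
    √π * Real.Gamma (ν + 1/2) =
      Real.Gamma (ν + 1) * ∫ x in (0:ℝ)..1, x ^ (-(1/2) : ℝ) * (1 - x) ^ (ν - 1/2) := by
  have h := Complex.Gamma_mul_Gamma_eq_betaIntegral (s := (1/2 : ℂ)) (t := (ν : ℂ) + 1/2)
    (by norm_num) (by simp; linarith)
  have hbeta : Complex.betaIntegral (1/2) ((ν:ℂ) + 1/2)
      = ((∫ x in (0:ℝ)..1, x ^ (-(1/2) : ℝ) * (1 - x) ^ (ν - 1/2) : ℝ) : ℂ) := by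
    rw [Complex.betaIntegral, ← intervalIntegral.integral_ofReal]
    apply intervalIntegral.integral_congr
    intro x hx
    rw [Set.uIcc_of_le (by norm_num : (0:ℝ) ≤ 1)] at hx
    have e := cplx_eq (ν - 1/2) x hx.1 hx.2
    have e2 : ((ν:ℂ) + 1/2) - 1 = (((ν - 1/2 : ℝ):ℂ) + 1) - 1 := by push_cast; ring
    rw [e2]
    exact e
  rw [hbeta] at h
  have hsum : (1:ℂ)/2 + ((ν:ℂ) + 1/2) = ((ν + 1 : ℝ) : ℂ) := by push_cast; ring
  rw [hsum] at h
  have h12 : (1:ℂ)/2 = ((1/2 : ℝ) : ℂ) := by norm_num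
  have h32 : (ν:ℂ) + 1/2 = ((ν + 1/2 : ℝ) : ℂ) := by push_cast; ring
  rw [h32, h12, Complex.Gamma_ofReal, Complex.Gamma_ofReal, Complex.Gamma_ofReal] at h
  rw [← Complex.ofReal_mul, ← Complex.ofReal_mul] at h
  have := Complex.ofReal_injective h
  rwa [Real.Gamma_one_half_eq] at this

lemma subst_aux {p : ℝ} (hp : -1 < p) :
    (∫ x in (0:ℝ)..1, x ^ (-(1/2):ℝ) * (1 - x) ^ p)
      = 2 * ∫ t in (0:ℝ)..1, (1 - t ^ 2) ^ p := by
  have himg1 : (fun t : ℝ => t ^ 2) '' Set.Ioo 0 1 ⊆ Set.Ioo 0 1 := by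
    rintro _ ⟨t, ⟨ht0, ht1⟩, rfl⟩
    simp only [Set.mem_Ioo]
    exact ⟨by positivity, by nlinarith⟩
  have himg2 : (fun t : ℝ => t ^ 2) '' Set.uIcc 0 1 ⊆ Set.Icc 0 1 := by
    rw [Set.uIcc_of_le (by norm_num : (0:ℝ) ≤ 1)]
    rintro _ ⟨t, ⟨ht0, ht1⟩, rfl⟩
    simp only [Set.mem_Icc]
    exact ⟨by positivity, by nlinarith⟩
  have hIccIoc : IntegrableOn (fun t : ℝ => 2 * (1 - t ^ 2) ^ p) (Set.Icc 0 1) := by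
    rw [integrableOn_Icc_iff_integrableOn_Ioc]
    exact (integrableOn_one_sub_sq hp).const_mul 2
  have hg2 : IntegrableOn
      (fun t : ℝ => (2 * t) • ((fun u : ℝ => u ^ (-(1/2):ℝ) * (1 - u) ^ p) ∘ fun t : ℝ => t ^ 2) t)
      (Set.uIcc 0 1) := by
    rw [Set.uIcc_of_le (by norm_num : (0:ℝ) ≤ 1)]
    apply hIccIoc.congr_fun_ae
    have h0 : ∀ᵐ t ∂volume.restrict (Set.Icc (0:ℝ) 1), t ≠ 0 := by
      apply ae_restrict_of_ae
      rw [MeasureTheory.ae_iff]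
      simpa using measure_singleton (0:ℝ)
    filter_upwards [h0, ae_restrict_mem measurableSet_Icc] with t ht0 htI
    have ht0' : 0 < t := lt_of_le_of_ne htI.1 (Ne.symm ht0)
    have hsq : ((t ^ 2 : ℝ)) ^ (-(1/2):ℝ) = t⁻¹ := by
      rw [← Real.rpow_natCast t 2, ← Real.rpow_mul ht0'.le]
      norm_num [Real.rpow_neg_one]
    simp only [Function.comp_apply, smul_eq_mul, hsq]
    field_simp
  have key := intervalIntegral.integral_comp_smul_deriv''' (a := (0:ℝ)) (b := 1)
    (f := fun t : ℝ => t ^ 2) (f' := fun t : ℝ => 2 * t)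
    (g := fun u : ℝ => u ^ (-(1/2):ℝ) * (1 - u) ^ p)
    ((continuous_pow 2).continuousOn)
    (by
      intro t ht
      exact (by simpa using (hasDerivAt_pow 2 t).hasDerivWithinAt :
        HasDerivWithinAt (fun t : ℝ => t ^ 2) (2 * t) (Set.Ioi t) t))
    (by
      have himg1' : (fun t : ℝ => t ^ 2) '' Set.Ioo (min 0 1) (max 0 1) ⊆ Set.Ioo 0 1 := by
        simpa using himg1
      apply ContinuousOn.mono _ himg1'
      apply ContinuousOn.mul
      · exact ContinuousOn.rpow_const continuousOn_id (fun u hu => Or.inl (ne_of_gt hu.1))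
      · exact ContinuousOn.rpow_const (continuous_const.sub continuous_id).continuousOn
          (fun u hu => Or.inl (show (1:ℝ) - u ≠ 0 from sub_ne_zero.mpr (ne_of_gt hu.2))))
    ((betaIntegrand_integrableOn hp).mono_set himg2)
    hg2
  simp only [ne_eq, OfNat.ofNat_ne_zero, not_false_eq_true, zero_pow, one_pow] at key
  rw [← key]
  rw [intervalIntegral.integral_of_le zero_le_one, intervalIntegral.integral_of_le zero_le_one,
    ← MeasureTheory.integral_const_mul]
  apply MeasureTheory.setIntegral_congr_fun measurableSet_Ioc
  intro t ht
  have ht0' : 0 < t := ht.1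
  have hsq : ((t ^ 2 : ℝ)) ^ (-(1/2):ℝ) = t⁻¹ := by
    rw [← Real.rpow_natCast t 2, ← Real.rpow_mul ht0'.le]
    norm_num [Real.rpow_neg_one]
  simp only [Function.comp_apply, smul_eq_mul, hsq]
  field_simp

end Aux

set_option maxHeartbeats 1000000 in
theorem strM_chebyshev_bound (ν x : ℝ) (hx : 0 < x) :
    (1 / 2 ≤ ν →
      strM ν x ≥ Real.Gamma (ν + 1 / 2) / Real.Gamma (ν + 1) * ((1 - Real.exp (-x)) / x)) ∧
    (|ν| < 1 / 2 →
      strM ν x ≤ Real.Gamma (ν + 1 / 2) / Real.Gamma (ν + 1) * ((1 - Real.exp (-x)) / x)) := by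
  have hsqrtpi : (0:ℝ) < √π := Real.sqrt_pos.mpr Real.pi_pos
  have h2pi : (0:ℝ) ≤ 2 / √π := by positivity
  -- exp integral
  have hexpint : ∫ t in Set.Ioo (0:ℝ) 1, Real.exp (-x * t) = (1 - Real.exp (-x)) / x := by
    have h := intervalIntegral.smul_integral_comp_mul_left (a := (0:ℝ)) (b := 1)
      (fun u => Real.exp u) (-x)
    rw [integral_exp] at h
    simp only [mul_zero, mul_one, Real.exp_zero, smul_eq_mul] at h
    have hint : ∫ t in (0:ℝ)..1, Real.exp (-x * t) = (1 - Real.exp (-x)) / x := by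
      rw [eq_div_iff (ne_of_gt hx)]
      linear_combination -h
    rw [← hint, intervalIntegral.integral_of_le zero_le_one,
      MeasureTheory.integral_Ioc_eq_integral_Ioo]
  -- common setup depending on -1 < ν - 1/2
  have main : ∀ _ : -(1/2:ℝ) < ν,
      (strM ν x = 2 / √π * ∫ t in Set.Ioo (0:ℝ) 1, (1 - t ^ 2) ^ (ν - 1/2) * Real.exp (-x * t)) ∧
      (Real.Gamma (ν + 1 / 2) / Real.Gamma (ν + 1) * ((1 - Real.exp (-x)) / x)
        = 2 / √π * ((∫ t in Set.Ioo (0:ℝ) 1, (1 - t ^ 2) ^ (ν - 1/2)) *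
            ∫ t in Set.Ioo (0:ℝ) 1, Real.exp (-x * t))) := by
    intro hν
    constructor
    · rw [strM, intervalIntegral.integral_of_le zero_le_one,
        MeasureTheory.integral_Ioc_eq_integral_Ioo]
    · have hs := subst_aux (p := ν - 1/2) (by linarith)
      have hb := realBeta ν hν
      rw [hs] at hb
      have hΓ : 0 < Real.Gamma (ν + 1) := Real.Gamma_pos_of_pos (by linarith)
      have hI : ∫ t in (0:ℝ)..1, (1 - t ^ 2) ^ (ν - 1/2)
          = ∫ t in Set.Ioo (0:ℝ) 1, (1 - t ^ 2) ^ (ν - 1/2) := by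
        rw [intervalIntegral.integral_of_le zero_le_one,
          MeasureTheory.integral_Ioc_eq_integral_Ioo]
      rw [hI] at hb
      rw [hexpint]
      have hratio : Real.Gamma (ν + 1 / 2) / Real.Gamma (ν + 1)
          = 2 / √π * ∫ t in Set.Ioo (0:ℝ) 1, (1 - t ^ 2) ^ (ν - 1/2) := by
        rw [show 2 / √π * ∫ t in Set.Ioo (0:ℝ) 1, (1 - t ^ 2) ^ (ν - 1/2)
            = (2 * ∫ t in Set.Ioo (0:ℝ) 1, (1 - t ^ 2) ^ (ν - 1/2)) / √π by ring,
          div_eq_div_iff hΓ.ne' hsqrtpi.ne']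
        linear_combination hb
      rw [hratio]; ring
  constructor
  · intro hν
    have hν' : -(1/2:ℝ) < ν := by linarith
    obtain ⟨hM, hC⟩ := main hν'
    rw [hM, hC]
    apply mul_le_mul_of_nonneg_left _ h2pi
    apply cheb_ge (integrableOn_one_sub_sq_Ioo (by linarith)) integrableOn_exp_Ioo
      (integrableOn_main (by linarith) hx.le)
    intro s hs t ht
    obtain ⟨hs0, hs1⟩ := hs
    obtain ⟨ht0, ht1⟩ := ht
    have hp : (0:ℝ) ≤ ν - 1/2 := by linarith
    rcases le_total s t with hst | hst
    · have hf : (1 - t ^ 2) ^ (ν - 1/2) ≤ (1 - s ^ 2) ^ (ν - 1/2) :=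
        Real.rpow_le_rpow (by nlinarith [ht1]) (by nlinarith) hp
      have hg : Real.exp (-x * t) ≤ Real.exp (-x * s) := by
        apply Real.exp_le_exp.mpr; nlinarith
      have := mul_nonneg (sub_nonneg.mpr hf) (sub_nonneg.mpr hg)
      nlinarith [this]
    · have hf : (1 - s ^ 2) ^ (ν - 1/2) ≤ (1 - t ^ 2) ^ (ν - 1/2) :=
        Real.rpow_le_rpow (by nlinarith [hs1]) (by nlinarith) hp
      have hg : Real.exp (-x * s) ≤ Real.exp (-x * t) := by
        apply Real.exp_le_exp.mpr; nlinarith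
      have := mul_nonneg (sub_nonneg.mpr hf) (sub_nonneg.mpr hg)
      nlinarith [this]
  · intro hν
    rw [abs_lt] at hν
    obtain ⟨hν1, hν2⟩ := hν
    have hν' : -(1/2:ℝ) < ν := by linarith
    obtain ⟨hM, hC⟩ := main hν'
    rw [hM, hC]
    apply mul_le_mul_of_nonneg_left _ h2pi
    apply cheb_le (integrableOn_one_sub_sq_Ioo (by linarith)) integrableOn_exp_Ioo
      (integrableOn_main (by linarith) hx.le)
    intro s hs t ht
    obtain ⟨hs0, hs1⟩ := hs
    obtain ⟨ht0, ht1⟩ := ht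
    have hp : ν - 1/2 ≤ 0 := by linarith
    rcases le_total s t with hst | hst
    · have hf : (1 - s ^ 2) ^ (ν - 1/2) ≤ (1 - t ^ 2) ^ (ν - 1/2) :=
        Real.rpow_le_rpow_of_nonpos (by nlinarith [ht1]) (by nlinarith) hp
      have hg : Real.exp (-x * t) ≤ Real.exp (-x * s) := by
        apply Real.exp_le_exp.mpr; nlinarith
      nlinarith [mul_nonneg (sub_nonneg.mpr hf) (sub_nonneg.mpr hg)]
    · have hf : (1 - t ^ 2) ^ (ν - 1/2) ≤ (1 - s ^ 2) ^ (ν - 1/2) :=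
        Real.rpow_le_rpow_of_nonpos (by nlinarith [hs1]) (by nlinarith) hp
      have hg : Real.exp (-x * s) ≤ Real.exp (-x * t) := by
        apply Real.exp_le_exp.mpr; nlinarith
      nlinarith [mul_nonneg (sub_nonneg.mpr hf) (sub_nonneg.mpr hg)]
end

section
/- For all ν ≥ 3/2 and x > 0, M_{ν-1}(x) · M_{ν+1}(x) ≤ M_{1/2}(x) · M_{2ν-1/2}(x), and the inequality is reversed for ν ∈ (1/2, 3/2), where M_ν(x) = (2/√π) ∫₀¹ (1-t²)^(ν-1/2) e^(-xt) dt. -/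
open Real MeasureTheory intervalIntegral

namespace StrMAux

noncomputable def J (x α : ℝ) : ℝ :=
  ∫ t in (0:ℝ)..1, (1 - t ^ 2) ^ α * Real.exp (-x * t)

lemma J_def (x α : ℝ) : J x α = ∫ t in (0:ℝ)..1, (1 - t ^ 2) ^ α * Real.exp (-x * t) := rfl

lemma integrable_aux_s9 (x α : ℝ) (hα : -1 < α) :
    IntervalIntegrable (fun t => (1 - t ^ 2) ^ α * Real.exp (-x * t)) volume 0 1 := by
  have h1 : IntervalIntegrable (fun t : ℝ => (1 - t) ^ α) volume 0 1 := by
    have := ((intervalIntegrable_rpow' (a := 0) (b := 1) hα).comp_sub_left 1).symm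
    simpa using this
  have h2 : ContinuousOn (fun t : ℝ => (1 + t) ^ α * Real.exp (-x * t)) (Set.uIcc 0 1) := by
    apply ContinuousOn.mul
    · apply ContinuousOn.rpow_const (by fun_prop)
      intro t ht
      rw [Set.uIcc_of_le (by norm_num : (0:ℝ) ≤ 1)] at ht
      left
      nlinarith [ht.1]
    · fun_prop
  refine (h1.mul_continuousOn h2).congr_ae ?_
  have hsub : Set.uIoc (0:ℝ) 1 = Set.Ioc 0 1 := Set.uIoc_of_le (by norm_num)
  rw [Filter.EventuallyEq, ae_restrict_iff' measurableSet_uIoc]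
  refine Filter.Eventually.of_forall fun t ht => ?_
  rw [hsub] at ht
  have h1t : (0:ℝ) ≤ 1 - t := by linarith [ht.2]
  have h2t : (0:ℝ) ≤ 1 + t := by linarith [ht.1.le]
  have : (1 - t ^ 2 : ℝ) = (1 - t) * (1 + t) := by ring
  rw [this, Real.mul_rpow h1t h2t]
  ring

lemma inner_int (x a b : ℝ) (ha : -1 < a) (hb : -1 < b) (hab : 0 < a + b)
    (s : ℝ) (hs : s ∈ Set.Icc (0:ℝ) 1) :
    (∫ t in (0:ℝ)..1, Real.exp (-x * s) * Real.exp (-x * t) *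
        (((1 - s ^ 2) ^ a - (1 - t ^ 2) ^ a) * ((1 - s ^ 2) ^ b - (1 - t ^ 2) ^ b)))
    = (Real.exp (-x * s) * (1 - s ^ 2) ^ (a + b)) * J x 0
      + Real.exp (-x * s) * J x (a + b)
      - (Real.exp (-x * s) * (1 - s ^ 2) ^ a) * J x b
      - (Real.exp (-x * s) * (1 - s ^ 2) ^ b) * J x a := by
  have hs2 : (0:ℝ) ≤ 1 - s ^ 2 := by nlinarith [hs.1, hs.2]
  have hab' : a + b ≠ 0 := ne_of_gt hab
  have habm : (-1:ℝ) < a + b := by linarith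
  have hkey : Set.EqOn
      (fun t => Real.exp (-x * s) * Real.exp (-x * t) *
        (((1 - s ^ 2) ^ a - (1 - t ^ 2) ^ a) * ((1 - s ^ 2) ^ b - (1 - t ^ 2) ^ b)))
      (fun t => (Real.exp (-x * s) * (1 - s ^ 2) ^ (a + b)) *
          ((1 - t ^ 2) ^ (0:ℝ) * Real.exp (-x * t))
        + Real.exp (-x * s) * ((1 - t ^ 2) ^ (a + b) * Real.exp (-x * t))
        - (Real.exp (-x * s) * (1 - s ^ 2) ^ a) * ((1 - t ^ 2) ^ b * Real.exp (-x * t))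
        - (Real.exp (-x * s) * (1 - s ^ 2) ^ b) * ((1 - t ^ 2) ^ a * Real.exp (-x * t)))
      (Set.uIcc 0 1) := by
    intro t ht
    rw [Set.uIcc_of_le (by norm_num : (0:ℝ) ≤ 1)] at ht
    have ht2 : (0:ℝ) ≤ 1 - t ^ 2 := by nlinarith [ht.1, ht.2]
    simp only
    rw [Real.rpow_zero, Real.rpow_add' hs2 hab', Real.rpow_add' ht2 hab']
    ring
  rw [integral_congr hkey]
  have i0 := integrable_aux_s9 x 0 (by norm_num)
  have iab := integrable_aux_s9 x (a + b) habm
  have ia := integrable_aux_s9 x a ha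
  have ib := integrable_aux_s9 x b hb
  rw [integral_sub (((i0.const_mul _).add (iab.const_mul _)).sub (ib.const_mul _))
      (ia.const_mul _),
    integral_sub ((i0.const_mul _).add (iab.const_mul _)) (ib.const_mul _),
    integral_add (i0.const_mul _) (iab.const_mul _),
    intervalIntegral.integral_const_mul, intervalIntegral.integral_const_mul,
    intervalIntegral.integral_const_mul, intervalIntegral.integral_const_mul,
    ← J_def, ← J_def, ← J_def, ← J_def]

lemma core (x a b : ℝ) (ha : -1 < a) (hb : -1 < b) (hab : 0 < a + b) :
    (∫ s in (0:ℝ)..1, ∫ t in (0:ℝ)..1, Real.exp (-x * s) * Real.exp (-x * t) *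
        (((1 - s ^ 2) ^ a - (1 - t ^ 2) ^ a) * ((1 - s ^ 2) ^ b - (1 - t ^ 2) ^ b)))
    = 2 * (J x 0 * J x (a + b) - J x a * J x b) := by
  have habm : (-1:ℝ) < a + b := by linarith
  have h1 : Set.EqOn
      (fun s => ∫ t in (0:ℝ)..1, Real.exp (-x * s) * Real.exp (-x * t) *
        (((1 - s ^ 2) ^ a - (1 - t ^ 2) ^ a) * ((1 - s ^ 2) ^ b - (1 - t ^ 2) ^ b)))
      (fun s => J x 0 * ((1 - s ^ 2) ^ (a + b) * Real.exp (-x * s))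
        + J x (a + b) * ((1 - s ^ 2) ^ (0:ℝ) * Real.exp (-x * s))
        - J x b * ((1 - s ^ 2) ^ a * Real.exp (-x * s))
        - J x a * ((1 - s ^ 2) ^ b * Real.exp (-x * s)))
      (Set.uIcc 0 1) := by
    intro s hs
    rw [Set.uIcc_of_le (by norm_num : (0:ℝ) ≤ 1)] at hs
    simp only
    rw [inner_int x a b ha hb hab s hs, Real.rpow_zero]
    ring
  rw [integral_congr h1]
  have i0 := integrable_aux_s9 x 0 (by norm_num)
  have iab := integrable_aux_s9 x (a + b) habm
  have ia := integrable_aux_s9 x a ha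
  have ib := integrable_aux_s9 x b hb
  rw [integral_sub (((iab.const_mul _).add (i0.const_mul _)).sub (ia.const_mul _))
      (ib.const_mul _),
    integral_sub ((iab.const_mul _).add (i0.const_mul _)) (ia.const_mul _),
    integral_add (iab.const_mul _) (i0.const_mul _),
    intervalIntegral.integral_const_mul, intervalIntegral.integral_const_mul,
    intervalIntegral.integral_const_mul, intervalIntegral.integral_const_mul,
    ← J_def, ← J_def, ← J_def, ← J_def]
  ring

lemma sync_nonneg (x a b : ℝ) (ha : 0 ≤ a) (hb : 0 ≤ b) :
    0 ≤ ∫ s in (0:ℝ)..1, ∫ t in (0:ℝ)..1, Real.exp (-x * s) * Real.exp (-x * t) *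
        (((1 - s ^ 2) ^ a - (1 - t ^ 2) ^ a) * ((1 - s ^ 2) ^ b - (1 - t ^ 2) ^ b)) := by
  apply intervalIntegral.integral_nonneg (by norm_num)
  intro s hs
  apply intervalIntegral.integral_nonneg (by norm_num)
  intro t ht
  have hs2 : (0:ℝ) ≤ 1 - s ^ 2 := by nlinarith [hs.1, hs.2]
  have ht2 : (0:ℝ) ≤ 1 - t ^ 2 := by nlinarith [ht.1, ht.2]
  apply mul_nonneg (mul_nonneg (Real.exp_nonneg _) (Real.exp_nonneg _))
  rcases le_total (1 - s ^ 2) (1 - t ^ 2) with h | h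
  · have h1 := Real.rpow_le_rpow hs2 h ha
    have h2 := Real.rpow_le_rpow hs2 h hb
    nlinarith [h1, h2]
  · have h1 := Real.rpow_le_rpow ht2 h ha
    have h2 := Real.rpow_le_rpow ht2 h hb
    nlinarith [h1, h2]

lemma anti_nonpos (x a b : ℝ) (ha : a ≤ 0) (hb : 0 ≤ b) :
    (∫ s in (0:ℝ)..1, ∫ t in (0:ℝ)..1, Real.exp (-x * s) * Real.exp (-x * t) *
        (((1 - s ^ 2) ^ a - (1 - t ^ 2) ^ a) * ((1 - s ^ 2) ^ b - (1 - t ^ 2) ^ b))) ≤ 0 := by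
  have hone : ∀ᵐ u : ℝ ∂volume, u ≠ 1 := by
    rw [ae_iff]
    have : {u : ℝ | ¬ u ≠ 1} = {1} := by ext u; simp
    rw [this]
    exact measure_singleton 1
  have key : ∀ s : ℝ, s ∈ Set.Icc (0:ℝ) 1 → s ≠ 1 →
      (∫ t in (0:ℝ)..1, Real.exp (-x * s) * Real.exp (-x * t) *
        (((1 - s ^ 2) ^ a - (1 - t ^ 2) ^ a) * ((1 - s ^ 2) ^ b - (1 - t ^ 2) ^ b))) ≤ 0 := by
    intro s hs hs1
    rw [← neg_nonneg, ← intervalIntegral.integral_neg]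
    apply intervalIntegral.integral_nonneg_of_ae_restrict (by norm_num)
    filter_upwards [ae_restrict_of_ae hone, ae_restrict_mem measurableSet_Icc] with t ht1 ht
    simp only [Pi.zero_apply]
    have hs2 : (0:ℝ) < 1 - s ^ 2 := by
      rcases lt_or_eq_of_le hs.2 with h | h
      · nlinarith [hs.1]
      · exact absurd h hs1
    have ht2 : (0:ℝ) < 1 - t ^ 2 := by
      rcases lt_or_eq_of_le ht.2 with h | h
      · nlinarith [ht.1]
      · exact absurd h ht1
    rw [neg_nonneg]
    apply mul_nonpos_of_nonneg_of_nonpos (mul_nonneg (Real.exp_nonneg _) (Real.exp_nonneg _))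
    rcases le_total (1 - s ^ 2) (1 - t ^ 2) with h | h
    · have h1 := Real.rpow_le_rpow_of_nonpos hs2 h ha
      have h2 := Real.rpow_le_rpow hs2.le h hb
      exact mul_nonpos_of_nonneg_of_nonpos (by linarith) (by linarith)
    · have h1 := Real.rpow_le_rpow_of_nonpos ht2 h ha
      have h2 := Real.rpow_le_rpow ht2.le h hb
      exact mul_nonpos_of_nonpos_of_nonneg (by linarith) (by linarith)
  rw [← neg_nonneg, ← intervalIntegral.integral_neg]
  apply intervalIntegral.integral_nonneg_of_ae_restrict (by norm_num)
  filter_upwards [ae_restrict_of_ae hone, ae_restrict_mem measurableSet_Icc] with s hs1 hs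
  simp only [Pi.zero_apply]
  rw [neg_nonneg]
  exact key s hs hs1

lemma strM_eq (ν x : ℝ) : strM ν x = 2 / Real.sqrt Real.pi * J x (ν - 1 / 2) := rfl

end StrMAux

open StrMAux in
theorem strM_product_ineq (ν x : ℝ) (hx : 0 < x) :
    (3 / 2 ≤ ν → strM (ν - 1) x * strM (ν + 1) x ≤ strM (1 / 2) x * strM (2 * ν - 1 / 2) x) ∧
    (1 / 2 < ν → ν < 3 / 2 →
      strM (1 / 2) x * strM (2 * ν - 1 / 2) x ≤ strM (ν - 1) x * strM (ν + 1) x) := by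
  have hc : (0:ℝ) ≤ 2 / Real.sqrt Real.pi := by positivity
  have e1 : ν - 1 - 1 / 2 = ν - 3 / 2 := by ring
  have e2 : ν + 1 - 1 / 2 = ν + 1 / 2 := by ring
  have e3 : (1:ℝ) / 2 - 1 / 2 = 0 := by ring
  have e4 : 2 * ν - 1 / 2 - 1 / 2 = (ν - 3 / 2) + (ν + 1 / 2) := by ring
  rw [strM_eq, strM_eq, strM_eq, strM_eq, e1, e2, e3, e4]
  constructor
  · intro hν
    have ha : (-1:ℝ) < ν - 3 / 2 := by linarith
    have hb : (-1:ℝ) < ν + 1 / 2 := by linarith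
    have hab : (0:ℝ) < (ν - 3 / 2) + (ν + 1 / 2) := by linarith
    have hcore := core x (ν - 3 / 2) (ν + 1 / 2) ha hb hab
    have hsign := sync_nonneg x (ν - 3 / 2) (ν + 1 / 2) (by linarith) (by linarith)
    rw [hcore] at hsign
    have hJ : J x (ν - 3 / 2) * J x (ν + 1 / 2)
        ≤ J x 0 * J x ((ν - 3 / 2) + (ν + 1 / 2)) := by linarith
    calc 2 / Real.sqrt Real.pi * J x (ν - 3 / 2) * (2 / Real.sqrt Real.pi * J x (ν + 1 / 2))
        = (2 / Real.sqrt Real.pi * (2 / Real.sqrt Real.pi)) *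
            (J x (ν - 3 / 2) * J x (ν + 1 / 2)) := by ring
      _ ≤ (2 / Real.sqrt Real.pi * (2 / Real.sqrt Real.pi)) *
            (J x 0 * J x ((ν - 3 / 2) + (ν + 1 / 2))) :=
          mul_le_mul_of_nonneg_left hJ (mul_nonneg hc hc)
      _ = 2 / Real.sqrt Real.pi * J x 0 *
            (2 / Real.sqrt Real.pi * J x ((ν - 3 / 2) + (ν + 1 / 2))) := by ring
  · intro hν1 hν2
    have ha : (-1:ℝ) < ν - 3 / 2 := by linarith
    have hb : (-1:ℝ) < ν + 1 / 2 := by linarith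
    have hab : (0:ℝ) < (ν - 3 / 2) + (ν + 1 / 2) := by linarith
    have hcore := core x (ν - 3 / 2) (ν + 1 / 2) ha hb hab
    have hsign := anti_nonpos x (ν - 3 / 2) (ν + 1 / 2) (by linarith) (by linarith)
    rw [hcore] at hsign
    have hJ : J x 0 * J x ((ν - 3 / 2) + (ν + 1 / 2))
        ≤ J x (ν - 3 / 2) * J x (ν + 1 / 2) := by linarith
    calc 2 / Real.sqrt Real.pi * J x 0 *
            (2 / Real.sqrt Real.pi * J x ((ν - 3 / 2) + (ν + 1 / 2)))
        = (2 / Real.sqrt Real.pi * (2 / Real.sqrt Real.pi)) *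
            (J x 0 * J x ((ν - 3 / 2) + (ν + 1 / 2))) := by ring
      _ ≤ (2 / Real.sqrt Real.pi * (2 / Real.sqrt Real.pi)) *
            (J x (ν - 3 / 2) * J x (ν + 1 / 2)) :=
          mul_le_mul_of_nonneg_left hJ (mul_nonneg hc hc)
      _ = 2 / Real.sqrt Real.pi * J x (ν - 3 / 2) *
            (2 / Real.sqrt Real.pi * J x (ν + 1 / 2)) := by ring
end

section
/- For all ν > -1/2 and x > 0, M_ν(x) ≥ (Γ(ν+1/2)/Γ(ν+1)) · exp(-Γ(ν+1) x / (√π Γ(ν+3/2))), where M_ν(x) = (2/√π) ∫₀¹ (1-t²)^(ν-1/2) e^(-xt) dt. -/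
open Real MeasureTheory intervalIntegral
open Set


lemma real_beta_eq {a b : ℝ} (ha : 0 < a) (hb : 0 < b) :
    ∫ x in (0:ℝ)..1, x ^ (a - 1) * (1 - x) ^ (b - 1)
      = Real.Gamma a * Real.Gamma b / Real.Gamma (a + b) := by
  have key := Complex.Gamma_mul_Gamma_eq_betaIntegral (s := (a:ℂ)) (t := (b:ℂ))
    (by simpa using ha) (by simpa using hb)
  have hbeta : Complex.betaIntegral a b
      = ((∫ x in (0:ℝ)..1, x ^ (a - 1) * (1 - x) ^ (b - 1) : ℝ) : ℂ) := by
    rw [Complex.betaIntegral, ← intervalIntegral.integral_ofReal]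
    refine intervalIntegral.integral_congr fun t ht => ?_
    rw [uIcc_of_le (by norm_num)] at ht
    rw [Complex.ofReal_mul, Complex.ofReal_cpow ht.1, Complex.ofReal_cpow (by linarith [ht.2])]
    push_cast
    ring_nf
  rw [hbeta, ← Complex.ofReal_add, Complex.Gamma_ofReal, Complex.Gamma_ofReal,
    Complex.Gamma_ofReal, ← Complex.ofReal_mul, ← Complex.ofReal_mul] at key
  have := Complex.ofReal_inj.mp key
  rw [this]
  field_simp [(Real.Gamma_pos_of_pos (by linarith : (0:ℝ) < a + b)).ne']

lemma real_beta_integrableOn {a b : ℝ} (ha : 0 < a) (hb : 0 < b) :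
    IntegrableOn (fun x => x ^ (a - 1) * (1 - x) ^ (b - 1)) (Ioo (0:ℝ) 1) := by
  have h := (Complex.betaIntegral_convergent (u := (a:ℂ)) (v := (b:ℂ))
    (by simpa using ha) (by simpa using hb)).norm
  have h2 : IntegrableOn (fun x : ℝ => ‖(x:ℂ) ^ ((a:ℂ) - 1) * (1 - (x:ℂ)) ^ ((b:ℂ) - 1)‖)
      (Ioo (0:ℝ) 1) := by
    exact h.1.mono_set Ioo_subset_Ioc_self
  refine (h2.congr_fun (fun t ht => ?_) measurableSet_Ioo)
  have ht0 : (0:ℝ) ≤ t := ht.1.le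
  have ht1 : (0:ℝ) ≤ 1 - t := by linarith [ht.2]
  beta_reduce
  rw [show ((a:ℂ) - 1) = ((a - 1 : ℝ) : ℂ) by push_cast; ring,
    show ((b:ℂ) - 1) = ((b - 1 : ℝ) : ℂ) by push_cast; ring,
    show (1 - (t:ℂ)) = ((1 - t : ℝ) : ℂ) by push_cast; ring,
    ← Complex.ofReal_cpow ht0, ← Complex.ofReal_cpow ht1, ← Complex.ofReal_mul,
    Complex.norm_real, Real.norm_of_nonneg (by positivity)]

lemma sq_stuff :
    ((fun t : ℝ => t ^ 2) '' Ioo 0 1 = Ioo 0 1) ∧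
    (∀ t ∈ Ioo (0:ℝ) 1, HasDerivWithinAt (fun t : ℝ => t ^ 2) (2 * t) (Ioo 0 1) t) ∧
    InjOn (fun t : ℝ => t ^ 2) (Ioo 0 1) := by
  refine ⟨?_, fun t ht => ?_, ?_⟩
  · ext s
    constructor
    · rintro ⟨t, ⟨h1, h2⟩, rfl⟩
      exact ⟨by positivity, by simpa using pow_lt_one₀ h1.le h2 two_ne_zero⟩
    · rintro ⟨h1, h2⟩
      exact ⟨Real.sqrt s, ⟨Real.sqrt_pos.mpr h1, by
        rw [show (1:ℝ) = Real.sqrt 1 by simp]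
        exact Real.sqrt_lt_sqrt h1.le h2⟩, Real.sq_sqrt h1.le⟩
  · simpa [mul_comm] using (hasDerivAt_pow 2 t).hasDerivWithinAt
  · exact (fun a ha b hb hab => by
      simp only at hab
      nlinarith [ha.1, hb.1, sq_nonneg (a - b), sq_nonneg (a + b)])

lemma subst_sq (g : ℝ → ℝ) :
    ∫ s in Ioo (0:ℝ) 1, g s = ∫ t in Ioo (0:ℝ) 1, |2 * t| * g (t ^ 2) := by
  obtain ⟨him, hd, hinj⟩ := sq_stuff
  have := integral_image_eq_integral_abs_deriv_smul measurableSet_Ioo hd hinj g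
  rw [him] at this
  simpa using this

lemma subst_sq_integrable (g : ℝ → ℝ) :
    IntegrableOn g (Ioo (0:ℝ) 1) ↔
      IntegrableOn (fun t => |2 * t| * g (t ^ 2)) (Ioo (0:ℝ) 1) := by
  obtain ⟨him, hd, hinj⟩ := sq_stuff
  have := integrableOn_image_iff_integrableOn_abs_deriv_smul measurableSet_Ioo hd hinj g
  rw [him] at this
  simpa using this

variable {p : ℝ}

lemma w_integrableOn (hp : -1 < p) :
    IntegrableOn (fun t : ℝ => (1 - t ^ 2) ^ p) (Ioo (0:ℝ) 1) := by
  have h := (subst_sq_integrable (fun s => s ^ ((1:ℝ)/2 - 1) * (1 - s) ^ ((p+1) - 1))).mp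
    (real_beta_integrableOn (by norm_num) (by linarith))
  have h2 : IntegrableOn (fun t : ℝ => 2 * (1 - t ^ 2) ^ p) (Ioo (0:ℝ) 1) := by
    refine h.congr_fun (fun t ht => ?_) measurableSet_Ioo
    obtain ⟨ht0, ht1⟩ := ht
    have hpow : (t ^ 2 : ℝ) ^ ((1:ℝ)/2 - 1) = t⁻¹ := by
      rw [← Real.rpow_natCast t 2, ← Real.rpow_mul ht0.le]
      norm_num [Real.rpow_neg_one]
    simp only [hpow, abs_of_pos (by linarith : (0:ℝ) < 2 * t), add_sub_cancel_right]
    field_simp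
  have h3 := h2.const_mul (2:ℝ)⁻¹
  simp at h3
  exact h3

lemma wA_eq (hp : -1 < p) :
    ∫ t in Ioo (0:ℝ) 1, (1 - t ^ 2) ^ p
      = Real.sqrt π * Real.Gamma (p + 1) / (2 * Real.Gamma (p + 3/2)) := by
  have hbeta : ∫ s in (0:ℝ)..1, s ^ ((1:ℝ)/2 - 1) * (1 - s) ^ ((p+1) - 1)
      = Real.Gamma (1/2) * Real.Gamma (p+1) / Real.Gamma (1/2 + (p+1)) :=
    real_beta_eq (by norm_num) (by linarith)
  have hsub := subst_sq (fun s => s ^ ((1:ℝ)/2 - 1) * (1 - s) ^ ((p+1) - 1))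
  have hcongr : ∫ t in Ioo (0:ℝ) 1, |2 * t| * ((t ^ 2) ^ ((1:ℝ)/2 - 1) * (1 - t ^ 2) ^ ((p+1) - 1))
      = ∫ t in Ioo (0:ℝ) 1, 2 * (1 - t ^ 2) ^ p := by
    refine setIntegral_congr_fun measurableSet_Ioo (fun t ht => ?_)
    obtain ⟨ht0, ht1⟩ := ht
    have hpow : (t ^ 2 : ℝ) ^ ((1:ℝ)/2 - 1) = t⁻¹ := by
      rw [← Real.rpow_natCast t 2, ← Real.rpow_mul ht0.le]
      norm_num [Real.rpow_neg_one]
    simp only [hpow, abs_of_pos (by linarith : (0:ℝ) < 2 * t), add_sub_cancel_right]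
    field_simp
  have hIoo : ∫ s in (0:ℝ)..1, s ^ ((1:ℝ)/2 - 1) * (1 - s) ^ ((p+1) - 1)
      = ∫ s in Ioo (0:ℝ) 1, s ^ ((1:ℝ)/2 - 1) * (1 - s) ^ ((p+1) - 1) := by
    rw [intervalIntegral.integral_of_le (by norm_num), integral_Ioc_eq_integral_Ioo]
  have h2 : (2:ℝ) * ∫ t in Ioo (0:ℝ) 1, (1 - t ^ 2) ^ p
      = Real.Gamma (1/2) * Real.Gamma (p+1) / Real.Gamma (1/2 + (p+1)) := by
    rw [← MeasureTheory.integral_const_mul, ← hcongr, ← hsub, ← hIoo, hbeta]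
  rw [Real.Gamma_one_half_eq] at h2
  have : (1:ℝ)/2 + (p+1) = p + 3/2 := by ring
  rw [this] at h2
  have h3 : Real.sqrt π * Real.Gamma (p + 1) / (2 * Real.Gamma (p + 3/2))
      = (Real.sqrt π * Real.Gamma (p + 1) / Real.Gamma (p + 3/2)) / 2 := by
    ring
  rw [h3, ← h2]
  ring

lemma wB_eq (hp : -1 < p) :
    ∫ t in Ioo (0:ℝ) 1, t * (1 - t ^ 2) ^ p = 1 / (2 * (p + 1)) := by
  have hbeta : ∫ s in (0:ℝ)..1, s ^ ((1:ℝ) - 1) * (1 - s) ^ ((p+1) - 1)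
      = Real.Gamma 1 * Real.Gamma (p+1) / Real.Gamma (1 + (p+1)) :=
    real_beta_eq (by norm_num) (by linarith)
  have hsub := subst_sq (fun s => s ^ ((1:ℝ) - 1) * (1 - s) ^ ((p+1) - 1))
  have hcongr : ∫ t in Ioo (0:ℝ) 1, |2 * t| * ((t ^ 2) ^ ((1:ℝ) - 1) * (1 - t ^ 2) ^ ((p+1) - 1))
      = ∫ t in Ioo (0:ℝ) 1, 2 * (t * (1 - t ^ 2) ^ p) := by
    refine setIntegral_congr_fun measurableSet_Ioo (fun t ht => ?_)
    obtain ⟨ht0, ht1⟩ := ht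
    simp only [sub_self, Real.rpow_zero, one_mul, add_sub_cancel_right,
      abs_of_pos (by linarith : (0:ℝ) < 2 * t)]
    ring
  have hIoo : ∫ s in (0:ℝ)..1, s ^ ((1:ℝ) - 1) * (1 - s) ^ ((p+1) - 1)
      = ∫ s in Ioo (0:ℝ) 1, s ^ ((1:ℝ) - 1) * (1 - s) ^ ((p+1) - 1) := by
    rw [intervalIntegral.integral_of_le (by norm_num), integral_Ioc_eq_integral_Ioo]
  have h2 : (2:ℝ) * ∫ t in Ioo (0:ℝ) 1, t * (1 - t ^ 2) ^ p
      = Real.Gamma 1 * Real.Gamma (p+1) / Real.Gamma (1 + (p+1)) := by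
    rw [← MeasureTheory.integral_const_mul, ← hcongr, ← hsub, ← hIoo, hbeta]
  have hG : Real.Gamma (1 + (p+1)) = (p+1) * Real.Gamma (p+1) := by
    rw [add_comm]
    exact Real.Gamma_add_one (by linarith)
  rw [Real.Gamma_one, hG, one_mul] at h2
  have hGp : Real.Gamma (p+1) ≠ 0 := (Real.Gamma_pos_of_pos (by linarith)).ne'
  have h3 : Real.Gamma (p+1) / ((p+1) * Real.Gamma (p+1)) = 1 / (p+1) := by
    rw [mul_comm, ← div_div, div_self hGp]
  rw [h3] at h2
  have hp1 : p + 1 ≠ 0 := by linarith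
  have h4 : (1:ℝ) / (2 * (p + 1)) = (1 / (p+1)) / 2 := by
    field_simp
  rw [h4, ← h2]
  ring
theorem strM_lower_bound (ν x : ℝ) (hν : -1 / 2 < ν) (hx : 0 < x) :
    strM ν x ≥ Real.Gamma (ν + 1 / 2) / Real.Gamma (ν + 1) *
      Real.exp (-(Real.Gamma (ν + 1) * x) / (Real.sqrt Real.pi * Real.Gamma (ν + 3 / 2))) := by
  have hp : (-1:ℝ) < ν - 1/2 := by linarith
  have h12 : (0:ℝ) < ν + 1/2 := by linarith
  set w : ℝ → ℝ := fun t => (1 - t ^ 2) ^ (ν - 1/2) with hw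
  set A : ℝ := ∫ t in Ioo (0:ℝ) 1, w t with hAdef
  set B : ℝ := ∫ t in Ioo (0:ℝ) 1, t * w t with hBdef
  have hG1 : 0 < Real.Gamma (ν + 1/2) := Real.Gamma_pos_of_pos h12
  have hG2 : 0 < Real.Gamma (ν + 1) := Real.Gamma_pos_of_pos (by linarith)
  have hsπ : 0 < Real.sqrt π := Real.sqrt_pos.mpr Real.pi_pos
  have hA : A = Real.sqrt π * Real.Gamma (ν + 1/2) / (2 * Real.Gamma (ν + 1)) := by
    have := wA_eq (p := ν - 1/2) hp
    rw [show ν - 1/2 + 1 = ν + 1/2 by ring, show ν - 1/2 + 3/2 = ν + 1 by ring] at this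
    exact this
  have hB : B = 1 / (2 * (ν + 1/2)) := by
    have := wB_eq (p := ν - 1/2) hp
    rw [show ν - 1/2 + 1 = ν + 1/2 by ring] at this
    exact this
  have hApos : 0 < A := by
    rw [hA]; positivity
  set c : ℝ := B / A with hcdef
  have hG32 : Real.Gamma (ν + 3/2) = (ν + 1/2) * Real.Gamma (ν + 1/2) := by
    rw [show ν + 3/2 = (ν + 1/2) + 1 by ring, Real.Gamma_add_one h12.ne']
  have hc : c = Real.Gamma (ν + 1) / (Real.sqrt π * Real.Gamma (ν + 3/2)) := by
    rw [hcdef, hB, hA, hG32]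
    rw [div_div_div_eq]
    rw [div_eq_div_iff (by positivity) (by positivity)]
    ring
  -- integrability
  have asm : AEStronglyMeasurable w (volume.restrict (Ioo (0:ℝ) 1)) := by
    refine ContinuousOn.aestronglyMeasurable (fun t ht => ?_) measurableSet_Ioo
    have h1 : (1 - t ^ 2) ≠ 0 := by nlinarith [ht.1, ht.2]
    have h2 : ContinuousAt (fun s : ℝ => s ^ (ν - 1/2)) (1 - t ^ 2) :=
      Real.continuousAt_rpow_const _ _ (Or.inl h1)
    exact (ContinuousAt.comp (f := fun t : ℝ => 1 - t ^ 2) h2 (by fun_prop)).continuousWithinAt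
  have Iw : IntegrableOn w (Ioo (0:ℝ) 1) := w_integrableOn hp
  have hwnn : ∀ t ∈ Ioo (0:ℝ) 1, 0 ≤ w t := fun t ht => Real.rpow_nonneg (by nlinarith [ht.1, ht.2]) _
  have Itw : IntegrableOn (fun t => t * w t) (Ioo (0:ℝ) 1) := by
    refine Iw.mono' (measurable_id.aestronglyMeasurable.mul asm) ?_
    rw [ae_restrict_iff' measurableSet_Ioo]
    filter_upwards with t ht
    have h0 := hwnn t ht
    rw [Real.norm_eq_abs, abs_mul, abs_of_nonneg h0, abs_of_nonneg ht.1.le]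
    nlinarith [ht.2]
  have Iwe : IntegrableOn (fun t => w t * Real.exp (-x * t)) (Ioo (0:ℝ) 1) := by
    refine Iw.mono' (asm.mul (by fun_prop : Continuous fun t : ℝ => Real.exp (-x * t)).aestronglyMeasurable) ?_
    rw [ae_restrict_iff' measurableSet_Ioo]
    filter_upwards with t ht
    have h0 := hwnn t ht
    have he : Real.exp (-x * t) ≤ 1 := by
      rw [Real.exp_le_one_iff]
      nlinarith [ht.1]
    rw [Real.norm_eq_abs, abs_mul, abs_of_nonneg h0, abs_of_nonneg (Real.exp_pos _).le]
    nlinarith [Real.exp_pos (-x * t)]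
  -- the tangent-line minorant
  have key : ∀ t ∈ Ioo (0:ℝ) 1,
      Real.exp (-x * c) * ((1 + x * c) * w t - x * (t * w t)) ≤ w t * Real.exp (-x * t) := by
    intro t ht
    have h0 := hwnn t ht
    have h1 : Real.exp (-x * c) * (1 + x * (c - t)) ≤ Real.exp (-x * t) := by
      have h2 := Real.add_one_le_exp (x * (c - t))
      have h3 : Real.exp (-x * c) * Real.exp (x * (c - t)) = Real.exp (-x * t) := by
        rw [← Real.exp_add]; ring_nf
      calc Real.exp (-x * c) * (1 + x * (c - t))
          ≤ Real.exp (-x * c) * Real.exp (x * (c - t)) := by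
            apply mul_le_mul_of_nonneg_left (by linarith) (Real.exp_pos _).le
        _ = Real.exp (-x * t) := h3
    calc Real.exp (-x * c) * ((1 + x * c) * w t - x * (t * w t))
        = w t * (Real.exp (-x * c) * (1 + x * (c - t))) := by ring
      _ ≤ w t * Real.exp (-x * t) := mul_le_mul_of_nonneg_left h1 h0
  have Ilin : IntegrableOn
      (fun t => Real.exp (-x * c) * ((1 + x * c) * w t - x * (t * w t))) (Ioo (0:ℝ) 1) :=
    (((Iw.const_mul (1 + x * c)).sub (Itw.const_mul x)).const_mul _)
  have hmono := setIntegral_mono_on Ilin Iwe measurableSet_Ioo key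
  have hlin : ∫ t in Ioo (0:ℝ) 1, Real.exp (-x * c) * ((1 + x * c) * w t - x * (t * w t))
      = Real.exp (-x * c) * A := by
    rw [MeasureTheory.integral_const_mul, MeasureTheory.integral_sub
      (Iw.const_mul _) (Itw.const_mul _), MeasureTheory.integral_const_mul,
      MeasureTheory.integral_const_mul, ← hAdef, ← hBdef]
    have : (1 + x * c) * A - x * B = A := by
      rw [hcdef]; field_simp; ring
    rw [this]
  rw [hlin] at hmono
  -- convert strM to set integral and finish
  have hstr : strM ν x = 2 / Real.sqrt π * ∫ t in Ioo (0:ℝ) 1, w t * Real.exp (-x * t) := by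
    rw [strM, intervalIntegral.integral_of_le (by norm_num), integral_Ioc_eq_integral_Ioo]
  rw [ge_iff_le, hstr]
  have hfinal : Real.Gamma (ν + 1/2) / Real.Gamma (ν + 1) *
      Real.exp (-(Real.Gamma (ν + 1) * x) / (Real.sqrt π * Real.Gamma (ν + 3/2)))
      = 2 / Real.sqrt π * (Real.exp (-x * c) * A) := by
    rw [hA, hc]
    rw [show -(Real.Gamma (ν + 1) * x) / (Real.sqrt π * Real.Gamma (ν + 3/2))
      = -x * (Real.Gamma (ν + 1) / (Real.sqrt π * Real.Gamma (ν + 3/2))) by ring]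
    field_simp
  rw [hfinal]
  exact mul_le_mul_of_nonneg_left hmono (by positivity)
end

section
/- For all ν > -1/2, the inequality (2/√π) · (ν+1)/(ν+1/2) > Γ(ν+1/2)/Γ(ν+1) > √(2/π) · √(ν+1)/(ν+1/2) holds. -/
open Real
open MeasureTheory Set

noncomputable def betaI (x : ℝ) : ℝ :=
  ∫ t in Ioo (0:ℝ) 1, t ^ (x - 1/2) * (1 - t) ^ (-(1/2) : ℝ)

lemma betaI_integrable {x : ℝ} (hx : 0 < x) :
    IntegrableOn (fun t : ℝ => t ^ (x - 1/2) * (1 - t) ^ (-(1/2) : ℝ)) (Ioo 0 1) := by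
  have hc : IntervalIntegrable
      (fun t : ℝ => (t : ℂ) ^ ((x + 1/2 : ℝ) - 1 : ℂ) * (1 - (t:ℂ)) ^ ((1/2 : ℝ) - 1 : ℂ))
      volume 0 1 := by
    have := Complex.betaIntegral_convergent (u := (x + 1/2 : ℝ)) (v := ((1:ℝ)/2))
      (by simpa using by positivity) (by norm_num)
    simpa using this
  have h1 : IntegrableOn
      (fun t : ℝ => (t : ℂ) ^ ((x + 1/2 : ℝ) - 1 : ℂ) * (1 - (t:ℂ)) ^ ((1/2 : ℝ) - 1 : ℂ))
      (Ioo 0 1) := ((hc.1).mono_set Ioo_subset_Ioc_self)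
  have h2 : IntegrableOn
      (fun t : ℝ => ((t ^ (x - 1/2) * (1 - t) ^ (-(1/2) : ℝ) : ℝ) : ℂ)) (Ioo 0 1) := by
    refine h1.congr_fun (fun t ht => ?_) measurableSet_Ioo
    have ht0 : (0:ℝ) ≤ t := le_of_lt ht.1
    have ht1 : (0:ℝ) ≤ 1 - t := by linarith [ht.2]
    have e1 : ((x + 1/2 : ℝ) : ℂ) - 1 = ((x - 1/2 : ℝ) : ℂ) := by push_cast; ring
    have e2 : (((1:ℝ)/2 : ℝ) : ℂ) - 1 = ((-(1/2) : ℝ) : ℂ) := by push_cast; ring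
    rw [e1, e2, Complex.ofReal_mul, Complex.ofReal_cpow ht0, Complex.ofReal_cpow ht1]
    norm_cast
  simpa [IntegrableOn] using h2.re

lemma betaI_eq {x : ℝ} (hx : 0 < x) :
    Real.sqrt π * Real.Gamma (x + 1/2) = Real.Gamma (x + 1) * betaI x := by
  have key := Complex.Gamma_mul_Gamma_eq_betaIntegral
    (s := ((x + 1/2 : ℝ) : ℂ)) (t := ((1/2 : ℝ) : ℂ))
    (by simpa using by positivity) (by norm_num)
  have hbeta : Complex.betaIntegral ((x + 1/2 : ℝ) : ℂ) ((1/2 : ℝ) : ℂ) = (betaI x : ℂ) := by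
    rw [Complex.betaIntegral]
    rw [intervalIntegral.integral_of_le zero_le_one]
    have : ∀ t ∈ Ioo (0:ℝ) 1,
        (t : ℂ) ^ (((x + 1/2 : ℝ) : ℂ) - 1) * (1 - (t:ℂ)) ^ (((1/2 : ℝ):ℂ) - 1)
          = ((t ^ (x - 1/2) * (1 - t) ^ (-(1/2) : ℝ) : ℝ) : ℂ) := by
      intro t ht
      have ht0 : (0:ℝ) ≤ t := le_of_lt ht.1
      have ht1 : (0:ℝ) ≤ 1 - t := by linarith [ht.2]
      have e1 : ((x + 1/2 : ℝ) : ℂ) - 1 = ((x - 1/2 : ℝ) : ℂ) := by push_cast; ring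
      have e2 : (((1:ℝ)/2 : ℝ) : ℂ) - 1 = ((-(1/2) : ℝ) : ℂ) := by push_cast; ring
      rw [e1, e2, Complex.ofReal_mul, Complex.ofReal_cpow ht0, Complex.ofReal_cpow ht1]
      norm_cast
    rw [MeasureTheory.integral_Ioc_eq_integral_Ioo,
        MeasureTheory.setIntegral_congr_fun measurableSet_Ioo this]
    simp only [betaI]
    exact integral_ofReal
  rw [hbeta, Complex.Gamma_ofReal, Complex.Gamma_ofReal] at key
  have harg : ((x + 1/2 : ℝ) : ℂ) + ((1/2 : ℝ) : ℂ) = ((x + 1 : ℝ) : ℂ) := by push_cast; ring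
  rw [harg, Complex.Gamma_ofReal] at key
  have := congrArg Complex.re key
  simp only [← Complex.ofReal_mul, Complex.ofReal_re] at this
  rw [Real.Gamma_one_half_eq] at this
  linarith [this]

lemma cov {x : ℝ} (hx : 0 < x) :
    Real.sqrt x * betaI x
      = ∫ s in Ioo (0:ℝ) 1,
          x ^ (-(1/2) : ℝ) * s ^ (1/(2*x)) * (1 - s ^ (1/x)) ^ (-(1/2) : ℝ) := by
  have hxne : x ≠ 0 := hx.ne'
  have himg : (fun s : ℝ => s ^ (1/x)) '' (Ioo 0 1) = Ioo 0 1 := by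
    apply Subset.antisymm
    · rintro t ⟨s, hs, rfl⟩
      exact ⟨Real.rpow_pos_of_pos hs.1 _, Real.rpow_lt_one hs.1.le hs.2 (by positivity)⟩
    · rintro t ht
      refine ⟨t ^ x, ⟨Real.rpow_pos_of_pos ht.1 _, Real.rpow_lt_one ht.1.le ht.2 hx⟩, ?_⟩
      show (t ^ x) ^ (1/x) = t
      rw [← Real.rpow_mul ht.1.le, mul_one_div_cancel hxne, Real.rpow_one]
  have hd : ∀ s ∈ Ioo (0:ℝ) 1,
      HasDerivWithinAt (fun s : ℝ => s ^ (1/x)) (1/x * s ^ (1/x - 1)) (Ioo 0 1) s :=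
    fun s hs => (Real.hasDerivAt_rpow_const (Or.inl hs.1.ne')).hasDerivWithinAt
  have hinj : InjOn (fun s : ℝ => s ^ (1/x)) (Ioo 0 1) :=
    (Real.rpow_left_injOn (by positivity : (1:ℝ)/x ≠ 0)).mono
      (fun s hs => le_of_lt hs.1)
  have key := integral_image_eq_integral_abs_deriv_smul measurableSet_Ioo hd hinj
      (fun t : ℝ => t ^ (x - 1/2) * (1 - t) ^ (-(1/2) : ℝ))
  rw [himg] at key
  have : betaI x = ∫ s in Ioo (0:ℝ) 1,
      |1/x * s ^ (1/x - 1)| • ((s ^ (1/x)) ^ (x - 1/2) * (1 - s ^ (1/x)) ^ (-(1/2) : ℝ)) := key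
  rw [this, ← MeasureTheory.integral_const_mul]
  refine setIntegral_congr_fun measurableSet_Ioo (fun s hs => ?_)
  have hs0 : (0:ℝ) < s := hs.1
  have habs : |1/x * s ^ (1/x - 1)| = 1/x * s ^ (1/x - 1) := by
    apply abs_of_pos; positivity
  rw [smul_eq_mul, habs, ← Real.rpow_mul hs0.le]
  have hsqrt : Real.sqrt x = x ^ ((1:ℝ)/2) := Real.sqrt_eq_rpow x
  have hxpow : x ^ (-(1/2):ℝ) = x ^ ((1:ℝ)/2) / x := by
    rw [show (-(1/2):ℝ) = 1/2 - 1 by norm_num, Real.rpow_sub hx, Real.rpow_one]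
  have hspow : s ^ (1/x - 1) * s ^ (1/x * (x - 1/2)) = s ^ (1/(2*x)) := by
    rw [← Real.rpow_add hs0]
    congr 1
    field_simp
    ring
  rw [hsqrt, hxpow]
  calc x ^ ((1:ℝ)/2) * (1/x * s ^ (1/x - 1) * (s ^ (1/x * (x - 1/2)) * (1 - s ^ (1/x)) ^ (-(1/2):ℝ)))
      = x ^ ((1:ℝ)/2) / x * (s ^ (1/x - 1) * s ^ (1/x * (x - 1/2))) * (1 - s ^ (1/x)) ^ (-(1/2):ℝ) := by
        ring
    _ = x ^ ((1:ℝ)/2) / x * s ^ (1/(2*x)) * (1 - s ^ (1/x)) ^ (-(1/2):ℝ) := by rw [hspow]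

lemma P_integrable {x : ℝ} (hx : 0 < x) :
    IntegrableOn (fun s : ℝ =>
      x ^ (-(1/2) : ℝ) * s ^ (1/(2*x)) * (1 - s ^ (1/x)) ^ (-(1/2) : ℝ)) (Ioo 0 1) := by
  have hxne : x ≠ 0 := hx.ne'
  have himg : (fun s : ℝ => s ^ (1/x)) '' (Ioo 0 1) = Ioo 0 1 := by
    apply Subset.antisymm
    · rintro t ⟨s, hs, rfl⟩
      exact ⟨Real.rpow_pos_of_pos hs.1 _, Real.rpow_lt_one hs.1.le hs.2 (by positivity)⟩
    · rintro t ht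
      refine ⟨t ^ x, ⟨Real.rpow_pos_of_pos ht.1 _, Real.rpow_lt_one ht.1.le ht.2 hx⟩, ?_⟩
      show (t ^ x) ^ (1/x) = t
      rw [← Real.rpow_mul ht.1.le, mul_one_div_cancel hxne, Real.rpow_one]
  have hd : ∀ s ∈ Ioo (0:ℝ) 1,
      HasDerivWithinAt (fun s : ℝ => s ^ (1/x)) (1/x * s ^ (1/x - 1)) (Ioo 0 1) s :=
    fun s hs => (Real.hasDerivAt_rpow_const (Or.inl hs.1.ne')).hasDerivWithinAt
  have hinj : InjOn (fun s : ℝ => s ^ (1/x)) (Ioo 0 1) :=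
    (Real.rpow_left_injOn (by positivity : (1:ℝ)/x ≠ 0)).mono
      (fun s hs => le_of_lt hs.1)
  have h0 : IntegrableOn (fun t : ℝ => t ^ (x - 1/2) * (1 - t) ^ (-(1/2) : ℝ))
      ((fun s : ℝ => s ^ (1/x)) '' (Ioo 0 1)) := by rw [himg]; exact betaI_integrable hx
  have h1 := (integrableOn_image_iff_integrableOn_abs_deriv_smul measurableSet_Ioo hd hinj
      (fun t : ℝ => t ^ (x - 1/2) * (1 - t) ^ (-(1/2) : ℝ))).mp h0
  have h2 : IntegrableOn (fun s : ℝ => Real.sqrt x *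
      (|1/x * s ^ (1/x - 1)| • ((s ^ (1/x)) ^ (x - 1/2) * (1 - s ^ (1/x)) ^ (-(1/2) : ℝ))))
      (Ioo 0 1) := h1.const_mul _
  refine h2.congr_fun (fun s hs => ?_) measurableSet_Ioo
  beta_reduce
  have hs0 : (0:ℝ) < s := hs.1
  have habs : |1/x * s ^ (1/x - 1)| = 1/x * s ^ (1/x - 1) := by
    apply abs_of_pos; positivity
  rw [smul_eq_mul, habs, ← Real.rpow_mul hs0.le]
  have hxpow : x ^ (-(1/2):ℝ) = x ^ ((1:ℝ)/2) / x := by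
    rw [show (-(1/2):ℝ) = 1/2 - 1 by norm_num, Real.rpow_sub hx, Real.rpow_one]
  have hspow : s ^ (1/x - 1) * s ^ (1/x * (x - 1/2)) = s ^ (1/(2*x)) := by
    rw [← Real.rpow_add hs0]
    congr 1
    field_simp
    ring
  rw [Real.sqrt_eq_rpow, hxpow]
  calc x ^ ((1:ℝ)/2) * (1/x * s ^ (1/x - 1) * (s ^ (1/x * (x - 1/2)) * (1 - s ^ (1/x)) ^ (-(1/2):ℝ)))
      = x ^ ((1:ℝ)/2) / x * (s ^ (1/x - 1) * s ^ (1/x * (x - 1/2))) * (1 - s ^ (1/x)) ^ (-(1/2):ℝ) := by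
        ring
    _ = x ^ ((1:ℝ)/2) / x * s ^ (1/(2*x)) * (1 - s ^ (1/x)) ^ (-(1/2):ℝ) := by rw [hspow]

lemma P_form {w : ℝ} (hw : 0 < w) {c : ℝ} (hc : 0 < c) :
    w ^ (-(1/2):ℝ) * Real.exp (-c) ^ (1/(2*w)) * (1 - Real.exp (-c) ^ (1/w)) ^ (-(1/2):ℝ)
      = (w * (Real.exp (c/w) - 1)) ^ (-(1/2):ℝ) := by
  have hu : 0 < c/w := div_pos hc hw
  have hexp : ∀ a b : ℝ, Real.exp a ^ b = Real.exp (a*b) := fun a b => by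
    rw [Real.rpow_def_of_pos (Real.exp_pos _), Real.log_exp]
  have hE : (0:ℝ) ≤ Real.exp (c/w) - 1 := by
    have := Real.add_one_le_exp (c/w); linarith
  have h1 : Real.exp (-c) ^ (1/(2*w)) = Real.exp (-(c/w)/2) := by
    rw [hexp]; congr 1; field_simp
  have h2 : Real.exp (-c) ^ (1/w) = Real.exp (-(c/w)) := by
    rw [hexp]; congr 1; field_simp
  have h3 : 1 - Real.exp (-(c/w)) = Real.exp (-(c/w)) * (Real.exp (c/w) - 1) := by
    rw [mul_sub, ← Real.exp_add, neg_add_cancel, Real.exp_zero, mul_one]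
  rw [h1, h2, h3, Real.mul_rpow (Real.exp_pos _).le hE, hexp,
    Real.mul_rpow hw.le hE]
  have h4 : Real.exp (-(c/w)/2) * Real.exp (-(c/w) * -(1/2)) = 1 := by
    rw [← Real.exp_add, show -(c/w)/2 + -(c/w) * -(1/2) = 0 by ring, Real.exp_zero]
  linear_combination (w ^ (-(1/2):ℝ) * (Real.exp (c/w) - 1) ^ (-(1/2):ℝ)) * h4

lemma P_lt {x y : ℝ} (hx : 0 < x) (hxy : x < y) {s : ℝ} (hs : s ∈ Ioo (0:ℝ) 1) :
    x ^ (-(1/2):ℝ) * s ^ (1/(2*x)) * (1 - s ^ (1/x)) ^ (-(1/2):ℝ)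
      < y ^ (-(1/2):ℝ) * s ^ (1/(2*y)) * (1 - s ^ (1/y)) ^ (-(1/2):ℝ) := by
  obtain ⟨hs0, hs1⟩ := hs
  have hy : 0 < y := lt_trans hx hxy
  set c := -Real.log s with hcdef
  have hcpos : 0 < c := by
    have := Real.log_neg hs0 hs1; simp only [hcdef]; linarith
  have hse : s = Real.exp (-c) := by rw [hcdef, neg_neg, Real.exp_log hs0]
  rw [hse, P_form hx hcpos, P_form hy hcpos]
  have hEx : (0:ℝ) < Real.exp (c/x) - 1 := by
    have h := Real.add_one_le_exp (c/x)
    have : 0 < c/x := div_pos hcpos hx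
    linarith
  have hEy : (0:ℝ) < Real.exp (c/y) - 1 := by
    have h := Real.add_one_le_exp (c/y)
    have : 0 < c/y := div_pos hcpos hy
    linarith
  have hQ : y * (Real.exp (c/y) - 1) < x * (Real.exp (c/x) - 1) := by
    have hu : 0 < c/y := div_pos hcpos hy
    have hv : 0 < c/x := div_pos hcpos hx
    have huv : c/y < c/x := div_lt_div_of_pos_left hcpos hx hxy
    have sec := strictConvexOn_exp.secant_strict_mono (Set.mem_univ (0:ℝ))
      (Set.mem_univ (c/y)) (Set.mem_univ (c/x)) hu.ne' hv.ne' huv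
    simp only [Real.exp_zero, sub_zero] at sec
    have hmul := mul_lt_mul_of_pos_left sec hcpos
    have e1 : c * ((Real.exp (c/y) - 1)/(c/y)) = y * (Real.exp (c/y) - 1) := by
      field_simp
    have e2 : c * ((Real.exp (c/x) - 1)/(c/x)) = x * (Real.exp (c/x) - 1) := by
      field_simp
    rw [e1, e2] at hmul
    exact hmul
  exact (Real.rpow_lt_rpow_iff_of_neg (mul_pos hx hEx) (mul_pos hy hEy)
    (by norm_num)).mpr hQ

lemma integral_pos_of_pos_on {f : ℝ → ℝ} (hf : ∀ t ∈ Ioo (0:ℝ) 1, 0 < f t)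
    (hfi : IntegrableOn f (Ioo 0 1)) : 0 < ∫ t in Ioo (0:ℝ) 1, f t := by
  rw [setIntegral_pos_iff_support_of_nonneg_ae
    ((ae_restrict_iff' measurableSet_Ioo).2
      (Filter.Eventually.of_forall fun t ht => (hf t ht).le)) hfi]
  refine lt_of_lt_of_le ?_ (measure_mono (fun t ht => ⟨(hf t ht).ne', ht⟩))
  rw [Real.volume_Ioo]
  norm_num

lemma betaI_half : betaI (1/2) = 2 := by
  have h := betaI_eq (x := 1/2) (by norm_num)
  have h32 : Real.Gamma ((1:ℝ)/2 + 1) = 1/2 * Real.Gamma (1/2) := by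
    rw [Real.Gamma_add_one (by norm_num)]
  rw [show (1:ℝ)/2 + 1/2 = 1 by norm_num, Real.Gamma_one, h32, Real.Gamma_one_half_eq] at h
  have hπ : 0 < Real.sqrt π := Real.sqrt_pos.2 Real.pi_pos
  nlinarith [h]

lemma betaI_lt_two {x : ℝ} (hx : 1/2 < x) : betaI x < 2 := by
  have hx0 : (0:ℝ) < x := by linarith
  have hi1 : IntegrableOn (fun t : ℝ => t ^ ((1:ℝ)/2 - 1/2) * (1 - t) ^ (-(1/2) : ℝ)) (Ioo 0 1) :=
    betaI_integrable (by norm_num)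
  have hix : IntegrableOn (fun t : ℝ => t ^ (x - 1/2) * (1 - t) ^ (-(1/2) : ℝ)) (Ioo 0 1) :=
    betaI_integrable hx0
  have hpos : 0 < ∫ t in Ioo (0:ℝ) 1,
      (t ^ ((1:ℝ)/2 - 1/2) * (1 - t) ^ (-(1/2) : ℝ) - t ^ (x - 1/2) * (1 - t) ^ (-(1/2) : ℝ)) := by
    refine integral_pos_of_pos_on (fun t ht => ?_) (hi1.sub hix)
    have h1 : t ^ ((1:ℝ)/2 - 1/2) = 1 := by
      rw [show (1:ℝ)/2 - 1/2 = 0 by norm_num, Real.rpow_zero]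
    have h2 : t ^ (x - 1/2) < 1 := Real.rpow_lt_one ht.1.le ht.2 (by linarith)
    have h3 : (0:ℝ) < (1 - t) ^ (-(1/2) : ℝ) := Real.rpow_pos_of_pos (by linarith [ht.2]) _
    rw [h1]
    nlinarith
  rw [MeasureTheory.integral_sub hi1 hix] at hpos
  have : betaI (1/2) - betaI x > 0 := by
    simpa only [betaI] using hpos
  rw [betaI_half] at this
  linarith

noncomputable def Pf (x s : ℝ) : ℝ :=
  x ^ (-(1/2) : ℝ) * s ^ (1/(2*x)) * (1 - s ^ (1/x)) ^ (-(1/2) : ℝ)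

lemma cov' {x : ℝ} (hx : 0 < x) :
    Real.sqrt x * betaI x = ∫ s in Ioo (0:ℝ) 1, Pf x s := by
  simpa only [Pf] using cov hx

lemma Pf_integrable {x : ℝ} (hx : 0 < x) : IntegrableOn (Pf x) (Ioo 0 1) := by
  exact P_integrable hx

lemma Pf_lt {x y : ℝ} (hx : 0 < x) (hxy : x < y) {s : ℝ} (hs : s ∈ Ioo (0:ℝ) 1) :
    Pf x s < Pf y s := by
  simpa only [Pf] using P_lt hx hxy hs

lemma sqrt_betaI_gt {x : ℝ} (hx : 1/2 < x) : Real.sqrt 2 < Real.sqrt x * betaI x := by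
  have hx0 : (0:ℝ) < x := by linarith
  rw [cov' hx0]
  have h12 : Real.sqrt ((1:ℝ)/2) * betaI (1/2) = ∫ s in Ioo (0:ℝ) 1, Pf (1/2) s :=
    cov' (by norm_num)
  rw [betaI_half] at h12
  have hsqrt2 : Real.sqrt ((1:ℝ)/2) * 2 = Real.sqrt 2 := by
    rw [show (1:ℝ)/2 = 2⁻¹ by norm_num, Real.sqrt_inv, inv_mul_eq_div,
      div_eq_iff (Real.sqrt_ne_zero'.2 (by norm_num)),
      Real.mul_self_sqrt (by norm_num)]
  have hi1 : IntegrableOn (Pf (1/2)) (Ioo 0 1) := Pf_integrable (by norm_num)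
  have hix : IntegrableOn (Pf x) (Ioo 0 1) := Pf_integrable hx0
  have hpos : 0 < ∫ s in Ioo (0:ℝ) 1, (Pf x s - Pf (1/2) s) := by
    refine integral_pos_of_pos_on (fun s hs => ?_) (hix.sub hi1)
    have := Pf_lt (x := 1/2) (y := x) (by norm_num) hx hs
    linarith
  rw [MeasureTheory.integral_sub hix hi1] at hpos
  rw [← hsqrt2, h12]
  linarith

theorem gamma_ratio_bounds (ν : ℝ) (hν : -1 / 2 < ν) :
    Real.Gamma (ν + 1 / 2) / Real.Gamma (ν + 1) <
        2 / Real.sqrt Real.pi * ((ν + 1) / (ν + 1 / 2)) ∧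
    Real.sqrt (2 / Real.pi) * (Real.sqrt (ν + 1) / (ν + 1 / 2)) <
        Real.Gamma (ν + 1 / 2) / Real.Gamma (ν + 1) := by
  have hν2 : 0 < ν + 1/2 := by linarith
  have hν1 : 0 < ν + 1 := by linarith
  have hx : (1:ℝ)/2 < ν + 1 := by linarith
  have hx0 : (0:ℝ) < ν + 1 := by linarith
  have hA : 0 < Real.Gamma (ν + 1/2) := Real.Gamma_pos_of_pos hν2
  have hB : 0 < Real.Gamma (ν + 1) := Real.Gamma_pos_of_pos hν1
  have hπ : 0 < Real.sqrt π := Real.sqrt_pos.2 Real.pi_pos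
  set A := Real.Gamma (ν + 1/2) with hAdef
  set B := Real.Gamma (ν + 1) with hBdef
  have hkey : Real.sqrt π * ((ν + 1/2) * A) = (ν + 1) * B * betaI (ν + 1) := by
    have h := betaI_eq (x := ν + 1) hx0
    have e1 : Real.Gamma (ν + 1 + 1/2) = (ν + 1/2) * A := by
      rw [show ν + 1 + 1/2 = (ν + 1/2) + 1 by ring, Real.Gamma_add_one hν2.ne']
    have e2 : Real.Gamma (ν + 1 + 1) = (ν + 1) * B := by
      rw [Real.Gamma_add_one hν1.ne']
    rw [e1, e2] at h
    exact h
  constructor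
  · -- upper bound
    have h2 : betaI (ν + 1) < 2 := betaI_lt_two hx
    rw [div_mul_div_comm, div_lt_div_iff₀ hB (by positivity)]
    nlinarith [mul_lt_mul_of_pos_left h2 (mul_pos hν1 hB)]
  · -- lower bound
    have h3 : Real.sqrt 2 < Real.sqrt (ν + 1) * betaI (ν + 1) := sqrt_betaI_gt hx
    have hs1 : 0 < Real.sqrt (ν + 1) := Real.sqrt_pos.2 hν1
    have e : Real.sqrt (ν + 1) * Real.sqrt (ν + 1) = ν + 1 := Real.mul_self_sqrt hν1.le
    rw [Real.sqrt_div (by norm_num : (0:ℝ) ≤ 2) π, div_mul_div_comm,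
      div_lt_div_iff₀ (by positivity) hB]
    calc Real.sqrt 2 * Real.sqrt (ν + 1) * B
        = (Real.sqrt (ν + 1) * B) * Real.sqrt 2 := by ring
      _ < (Real.sqrt (ν + 1) * B) * (Real.sqrt (ν + 1) * betaI (ν + 1)) :=
          mul_lt_mul_of_pos_left h3 (mul_pos hs1 hB)
      _ = (Real.sqrt (ν + 1) * Real.sqrt (ν + 1)) * (B * betaI (ν + 1)) := by ring
      _ = (ν + 1) * (B * betaI (ν + 1)) := by rw [e]
      _ = (ν + 1) * B * betaI (ν + 1) := by ring
      _ = Real.sqrt π * ((ν + 1/2) * A) := hkey.symm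
      _ = A * (Real.sqrt π * (ν + 1/2)) := by ring
end

section
/- For all ν > 1/2, the Turán-type inequality Γ(ν+3/2)² > (2/π) Γ(ν+1) Γ(ν+2) holds; equivalently Γ(ν+3/2)/Γ(ν+2) > √(2/(π(ν+1))) for all ν > -1/2. -/
open Real MeasureTheory Set intervalIntegral

noncomputable def myB (a : ℝ) : ℝ :=
  ∫ t in (0:ℝ)..1, t ^ (a - 1) * (1 - t) ^ (-(1/2) : ℝ)

lemma base_integrable {a : ℝ} (ha : 0 < a) :
    IntervalIntegrable (fun t : ℝ => t ^ (a - 1) * (1 - t) ^ (-(1/2) : ℝ)) volume 0 1 := by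
  apply IntervalIntegrable.trans (b := (1/2 : ℝ))
  · apply IntervalIntegrable.mul_continuousOn
    · exact intervalIntegrable_rpow' (by linarith)
    · apply ContinuousOn.rpow_const (by fun_prop)
      intro x hx
      rw [Set.uIcc_of_le (by norm_num : (0:ℝ) ≤ 1/2)] at hx
      left
      have := hx.2
      intro h
      have : (1:ℝ) - x ≥ 1/2 := by linarith
      linarith [h ▸ this]
  · apply IntervalIntegrable.continuousOn_mul (g := fun t : ℝ => t ^ (a-1))
    · have h1 : IntervalIntegrable (fun x : ℝ => x ^ (-(1/2):ℝ)) volume 0 (1/2) :=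
        intervalIntegrable_rpow' (by norm_num)
      have h2 := h1.comp_sub_left 1
      norm_num at h2
      exact h2.symm
    · apply ContinuousOn.rpow_const (by fun_prop)
      intro x hx
      rw [Set.uIcc_of_le (by norm_num : (1/2:ℝ) ≤ 1)] at hx
      left
      have := hx.1
      intro h; rw [h] at this; linarith

lemma myB_eq {a : ℝ} (ha : 0 < a) :
    Real.Gamma a * Real.sqrt π = Real.Gamma (a + 1/2) * myB a := by
  have h := Complex.Gamma_mul_Gamma_eq_betaIntegral (s := (a:ℂ)) (t := (1/2 : ℂ))
    (by simpa using ha) (by norm_num)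
  have hbeta : Complex.betaIntegral (a:ℂ) (1/2) = ((myB a : ℝ) : ℂ) := by
    rw [Complex.betaIntegral, myB, ← intervalIntegral.integral_ofReal]
    apply intervalIntegral.integral_congr_ae
    apply MeasureTheory.ae_of_all
    intro x hx
    rw [Set.uIoc_of_le (by norm_num : (0:ℝ) ≤ 1)] at hx
    push_cast
    rw [Complex.ofReal_cpow hx.1.le, Complex.ofReal_cpow (by linarith [hx.2] : (0:ℝ) ≤ 1 - x)]
    push_cast
    norm_num
  rw [hbeta, (by push_cast; ring : (a:ℂ) + 1/2 = ((a + 1/2 : ℝ) : ℂ)),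
    Complex.Gamma_ofReal, (by norm_num : (1/2:ℂ) = ((1/2:ℝ):ℂ)), Complex.Gamma_ofReal,
    Complex.Gamma_ofReal, Real.Gamma_one_half_eq] at h
  exact_mod_cast h

lemma myB_one : myB 1 = 2 := by
  have h := myB_eq (show (0:ℝ) < 1 by norm_num)
  rw [Real.Gamma_one, (by norm_num : (1:ℝ) + 1/2 = 1/2 + 1),
    Real.Gamma_add_one (by norm_num : (1/2:ℝ) ≠ 0), Real.Gamma_one_half_eq] at h
  have hs : 0 < Real.sqrt π := Real.sqrt_pos.mpr Real.pi_pos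
  nlinarith

lemma myB_half : myB (1/2) = π := by
  have h := myB_eq (show (0:ℝ) < 1/2 by norm_num)
  rw [Real.Gamma_one_half_eq, (by norm_num : (1:ℝ)/2 + 1/2 = 1), Real.Gamma_one] at h
  have hs : Real.sqrt π * Real.sqrt π = π := Real.mul_self_sqrt Real.pi_pos.le
  linarith

noncomputable def Fn (μ t : ℝ) : ℝ :=
  t ^ (μ - 1/2) * (1 - t) ^ (-(1/2):ℝ) * (π * t ^ ((1:ℝ)/2) - 2)

lemma Fn_integrable {μ : ℝ} (hμ : 0 ≤ μ) :
    IntervalIntegrable (Fn μ) volume 0 1 := by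
  have hb : IntervalIntegrable (fun t : ℝ => t ^ (μ + 1/2 - 1) * (1 - t) ^ (-(1/2):ℝ))
      volume 0 1 := base_integrable (by linarith)
  have : IntervalIntegrable
      (fun t : ℝ => (t ^ (μ + 1/2 - 1) * (1 - t) ^ (-(1/2):ℝ)) * (π * t ^ ((1:ℝ)/2) - 2))
      volume 0 1 := by
    apply hb.mul_continuousOn
    apply Continuous.continuousOn
    have : Continuous fun t : ℝ => t ^ ((1:ℝ)/2) :=
      continuous_id.rpow_const fun x => Or.inr (by norm_num)
    fun_prop
  have he : μ + 1/2 - 1 = μ - 1/2 := by ring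
  rw [he] at this
  exact this

lemma Fn_integral {μ : ℝ} (hμ : 0 ≤ μ) :
    ∫ t in (0:ℝ)..1, Fn μ t = π * myB (μ + 1) - 2 * myB (μ + 1/2) := by
  have h1 : ∫ t in (0:ℝ)..1, Fn μ t =
      ∫ t in (0:ℝ)..1, (π * (t ^ (μ + 1 - 1) * (1 - t) ^ (-(1/2):ℝ))
        - 2 * (t ^ (μ + 1/2 - 1) * (1 - t) ^ (-(1/2):ℝ))) := by
    apply intervalIntegral.integral_congr_ae
    apply MeasureTheory.ae_of_all
    intro x hx
    rw [Set.uIoc_of_le (by norm_num : (0:ℝ) ≤ 1)] at hx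
    have hx0 : 0 < x := hx.1
    have e1 : x ^ (μ + 1 - 1) = x ^ (μ - 1/2) * x ^ ((1:ℝ)/2) := by
      rw [← Real.rpow_add hx0]; ring_nf
    have e2 : μ + 1/2 - 1 = μ - 1/2 := by ring
    rw [e1, e2, Fn]; ring
  rw [h1, intervalIntegral.integral_sub ((base_integrable (by linarith : (0:ℝ) < μ + 1)).const_mul π)
    ((base_integrable (by linarith : (0:ℝ) < μ + 1/2)).const_mul 2),
    intervalIntegral.integral_const_mul, intervalIntegral.integral_const_mul, myB, myB]

lemma key_ineq {μ : ℝ} (hμ : 0 < μ) : 2 * myB (μ + 1/2) < π * myB (μ + 1) := by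
  set c : ℝ := 4 / π ^ 2 with hc
  have hπ : 0 < π := Real.pi_pos
  have hc0 : 0 < c := by positivity
  have hc1 : c < 1 := by
    rw [hc, div_lt_one (by positivity)]
    nlinarith [Real.pi_gt_three]
  have hcs : c ^ ((1:ℝ)/2) = 2 / π := by
    rw [← Real.sqrt_eq_rpow, hc, show (4:ℝ) = 2^2 by norm_num, ← div_pow,
      Real.sqrt_sq (by positivity)]
  -- Fn μ t = t^μ * Fn 0 t for t > 0
  have hfac : ∀ x : ℝ, 0 < x → Fn μ x = x ^ μ * Fn 0 x := by
    intro x hx0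
    rw [Fn, Fn]
    have : x ^ μ * x ^ ((0:ℝ) - 1/2) = x ^ (μ - 1/2) := by
      rw [← Real.rpow_add hx0]; ring_nf
    rw [← this]; ring
  have hF0 : IntervalIntegrable (Fn 0) volume 0 1 := Fn_integrable le_rfl
  have hFμ : IntervalIntegrable (Fn μ) volume 0 1 := Fn_integrable hμ.le
  have hF0int : ∫ t in (0:ℝ)..1, Fn 0 t = 0 := by
    rw [Fn_integral le_rfl, show (0:ℝ) + 1 = 1 by norm_num,
      show (0:ℝ) + 1/2 = 1/2 by norm_num, myB_one, myB_half]
    ring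
  set G : ℝ → ℝ := fun t => Fn μ t - c ^ μ * Fn 0 t with hG
  have hGint : IntervalIntegrable G volume 0 1 := hFμ.sub (hF0.const_mul _)
  have hGeq : ∫ t in (0:ℝ)..1, G t = ∫ t in (0:ℝ)..1, Fn μ t := by
    rw [hG]
    rw [intervalIntegral.integral_sub hFμ (hF0.const_mul _),
      intervalIntegral.integral_const_mul, hF0int]
    ring
  -- pointwise sign facts
  have hsign : ∀ x : ℝ, 0 < x → x < 1 → G x = (x ^ μ - c ^ μ) * Fn 0 x := by
    intro x hx0 _
    rw [hG]; simp only
    rw [hfac x hx0]; ring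
  have hF0sign : ∀ x : ℝ, 0 < x → x ≤ 1 →
      (x ≤ c → Fn 0 x ≤ 0) ∧ (c < x → x < 1 → 0 < Fn 0 x) := by
    intro x hx0 hx1
    constructor
    · intro hxc
      have h1 : x ^ ((1:ℝ)/2) ≤ c ^ ((1:ℝ)/2) :=
        Real.rpow_le_rpow hx0.le hxc (by norm_num)
      rw [hcs] at h1
      have h2 : π * x ^ ((1:ℝ)/2) - 2 ≤ 0 := by
        have := mul_le_mul_of_nonneg_left h1 hπ.le
        rw [mul_div_cancel₀ _ hπ.ne'] at this
        linarith
      rw [Fn]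
      apply mul_nonpos_of_nonneg_of_nonpos _ h2
      exact mul_nonneg (Real.rpow_nonneg hx0.le _) (Real.rpow_nonneg (by linarith) _)
    · intro hcx hx1'
      have h1 : c ^ ((1:ℝ)/2) < x ^ ((1:ℝ)/2) :=
        Real.rpow_lt_rpow hc0.le hcx (by norm_num)
      rw [hcs] at h1
      have h2 : 0 < π * x ^ ((1:ℝ)/2) - 2 := by
        have := mul_lt_mul_of_pos_left h1 hπ
        rw [mul_div_cancel₀ _ hπ.ne'] at this
        linarith
      have h3 : 0 < x ^ ((0:ℝ) - 1/2) := Real.rpow_pos_of_pos hx0 _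
      have h4 : 0 < (1 - x) ^ (-(1/2):ℝ) := Real.rpow_pos_of_pos (by linarith) _
      rw [Fn]
      positivity
  -- split the integral
  have hint1 : IntervalIntegrable G volume 0 c := by
    apply hGint.mono_set
    rw [Set.uIcc_of_le hc0.le, Set.uIcc_of_le (by norm_num : (0:ℝ) ≤ 1)]
    exact Set.Icc_subset_Icc le_rfl hc1.le
  have hint2 : IntervalIntegrable G volume c 1 := by
    apply hGint.mono_set
    rw [Set.uIcc_of_le hc1.le, Set.uIcc_of_le (by norm_num : (0:ℝ) ≤ 1)]
    exact Set.Icc_subset_Icc hc0.le le_rfl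
  have hsplit : ∫ t in (0:ℝ)..1, G t =
      (∫ t in (0:ℝ)..c, G t) + ∫ t in c..1, G t :=
    (intervalIntegral.integral_add_adjacent_intervals hint1 hint2).symm
  have hpart1 : 0 ≤ ∫ t in (0:ℝ)..c, G t := by
    rw [intervalIntegral.integral_of_le hc0.le]
    apply MeasureTheory.setIntegral_nonneg measurableSet_Ioc
    intro x hx
    have hx0 : 0 < x := hx.1
    have hxc : x ≤ c := hx.2
    have hx1 : x < 1 := lt_of_le_of_lt hxc hc1
    rw [hsign x hx0 hx1]
    have ha : x ^ μ - c ^ μ ≤ 0 := by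
      have : x ^ μ ≤ c ^ μ := Real.rpow_le_rpow hx0.le hxc hμ.le
      linarith
    have hb : Fn 0 x ≤ 0 := (hF0sign x hx0 hx1.le).1 hxc
    nlinarith [ha, hb]
  have hpart2 : 0 < ∫ t in c..1, G t := by
    apply intervalIntegral.intervalIntegral_pos_of_pos_on hint2 _ hc1
    intro x hx
    have hx0 : 0 < x := lt_trans hc0 hx.1
    rw [hsign x hx0 hx.2]
    apply mul_pos
    · have : c ^ μ < x ^ μ := Real.rpow_lt_rpow hc0.le hx.1 hμ
      linarith
    · exact (hF0sign x hx0 hx.2.le).2 hx.1 hx.2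
  have hpos : 0 < ∫ t in (0:ℝ)..1, Fn μ t := by
    rw [← hGeq, hsplit]; linarith
  rw [Fn_integral hμ.le] at hpos
  linarith

theorem gamma_turan_ineq :
    (∀ ν : ℝ, 1 / 2 < ν →
      2 / Real.pi * (Real.Gamma (ν + 1) * Real.Gamma (ν + 2)) < Real.Gamma (ν + 3 / 2) ^ 2) ∧
    (∀ ν : ℝ, -1 / 2 < ν →
      Real.sqrt (2 / (Real.pi * (ν + 1))) < Real.Gamma (ν + 3 / 2) / Real.Gamma (ν + 2)) := by
  have hπ : 0 < π := Real.pi_pos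
  have hs : 0 < Real.sqrt π := Real.sqrt_pos.mpr hπ
  have main : ∀ ν : ℝ, -1/2 < ν →
      2 * (Real.Gamma (ν + 1) * Real.Gamma (ν + 2)) < π * Real.Gamma (ν + 3/2) ^ 2 := by
    intro ν hν
    have hΓ1 : 0 < Real.Gamma (ν + 1) := Real.Gamma_pos_of_pos (by linarith)
    have hΓ32 : 0 < Real.Gamma (ν + 3/2) := Real.Gamma_pos_of_pos (by linarith)
    have hΓ2 : 0 < Real.Gamma (ν + 2) := Real.Gamma_pos_of_pos (by linarith)
    have hkey := key_ineq (μ := ν + 1/2) (by linarith)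
    rw [(show ν + 1/2 + 1/2 = ν + 1 by ring), (show ν + 1/2 + 1 = ν + 3/2 by ring)] at hkey
    have e1 := myB_eq (show (0:ℝ) < ν + 1 by linarith)
    rw [(show ν + 1 + 1/2 = ν + 3/2 by ring)] at e1
    have e2 := myB_eq (show (0:ℝ) < ν + 3/2 by linarith)
    rw [(show ν + 3/2 + 1/2 = ν + 2 by ring)] at e2
    have hB1 : 0 < myB (ν + 1) := by nlinarith
    have step : 2 * myB (ν + 1) * (Real.Gamma (ν + 2) * Real.Gamma (ν + 3/2)) <
        π * myB (ν + 3/2) * (Real.Gamma (ν + 2) * Real.Gamma (ν + 3/2)) := by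
      apply mul_lt_mul_of_pos_right _ (mul_pos hΓ2 hΓ32)
      nlinarith
    have lhs : 2 * myB (ν + 1) * (Real.Gamma (ν + 2) * Real.Gamma (ν + 3/2)) =
        2 * (Real.Gamma (ν + 1) * Real.Gamma (ν + 2)) * Real.sqrt π := by
      linear_combination (-(2 * Real.Gamma (ν + 2))) * e1
    have rhs : π * myB (ν + 3/2) * (Real.Gamma (ν + 2) * Real.Gamma (ν + 3/2)) =
        π * Real.Gamma (ν + 3/2) ^ 2 * Real.sqrt π := by
      linear_combination (-(π * Real.Gamma (ν + 3/2))) * e2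
    rw [lhs, rhs] at step
    exact lt_of_mul_lt_mul_right step hs.le
  constructor
  · intro ν hν
    have h := main ν (by linarith)
    rw [div_mul_eq_mul_div, div_lt_iff₀ hπ]
    linarith [h]
  · intro ν hν
    have hΓ1 : 0 < Real.Gamma (ν + 1) := Real.Gamma_pos_of_pos (by linarith)
    have hΓ32 : 0 < Real.Gamma (ν + 3/2) := Real.Gamma_pos_of_pos (by linarith)
    have hΓ2 : 0 < Real.Gamma (ν + 2) := Real.Gamma_pos_of_pos (by linarith)
    have h := main ν hν
    have hgadd : Real.Gamma (ν + 2) = (ν + 1) * Real.Gamma (ν + 1) := by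
      rw [(show ν + 2 = (ν + 1) + 1 by ring), Real.Gamma_add_one (by linarith : ν + 1 ≠ 0)]
    have hν1 : (0:ℝ) < ν + 1 := by linarith
    rw [Real.sqrt_lt' (div_pos hΓ32 hΓ2), div_pow, div_lt_div_iff₀ (mul_pos hπ hν1)
      (by positivity)]
    -- goal: 2 * Γ2^2 < Γ32^2 * (π * (ν+1))
    have hq : 2 * Real.Gamma (ν + 2) ^ 2 = (ν + 1) * (2 * (Real.Gamma (ν + 1) * Real.Gamma (ν + 2))) := by
      rw [hgadd]; ring
    have hq2 : (ν + 1) * (π * Real.Gamma (ν + 3/2) ^ 2) = Real.Gamma (ν + 3/2) ^ 2 * (π * (ν + 1)) := by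
      ring
    linarith [mul_lt_mul_of_pos_left h hν1]
end
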